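/- arXiv:2201.04257 — 4 statements merged into one kernel-verified Lean document; each statement's English description precedes it below -/
import Mathlib

section
/- For natural numbers n and k with 1 ≤ k ≤ n-1, the binomial coefficient satisfies 1/2 ≤ C(n,k) · exp(-n·H(k/n)) · √(2k(n-k)/n) ≤ 1/√π, where H is the binary entropy function with natural logarithm. -/
open Real

noncomputable def binEnt (x : ℝ) : ℝ := -(x * Real.log x) - (1 - x) * Real.log (1 - x)

lemma exp_ent (n k : ℕ) (hk1 : 1 ≤ k) (hk2 : k < n) :
    Real.exp (-(n : ℝ) * binEnt ((k : ℝ) / n)) =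
      (k : ℝ) ^ k * ((n - k : ℕ) : ℝ) ^ (n - k) / (n : ℝ) ^ n := by
  have hk0 : (0:ℝ) < k := by exact_mod_cast hk1
  have hn0 : (0:ℝ) < n := by exact_mod_cast Nat.lt_of_lt_of_le Nat.zero_lt_one (hk1.trans hk2.le)
  have hb : ((n - k : ℕ) : ℝ) = (n:ℝ) - k := by
    push_cast [Nat.cast_sub hk2.le]; ring
  have hb0 : (0:ℝ) < (n:ℝ) - k := by
    have : (k:ℝ) < n := by exact_mod_cast hk2
    linarith
  rw [hb]
  have h1 : (1:ℝ) - k/n = ((n:ℝ) - k)/n := by field_simp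
  rw [binEnt, h1, Real.log_div (by positivity) (by positivity),
    Real.log_div (by positivity) (by positivity)]
  have key : -(n:ℝ) * (-((k:ℝ)/n * (Real.log k - Real.log n)) -
      (((n:ℝ)-k)/n) * (Real.log ((n:ℝ)-k) - Real.log n)) =
      (k:ℝ)*Real.log k + (((n:ℝ)-k)*Real.log ((n:ℝ)-k) - (n:ℝ)*Real.log n) := by
    field_simp; ring
  rw [key, Real.exp_add, Real.exp_sub]
  rw [show ((k:ℝ) * Real.log k) = Real.log k * k by ring,
      show (((n:ℝ)-k) * Real.log ((n:ℝ)-k)) = Real.log ((n:ℝ)-k) * ((n:ℝ)-k) by ring,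
      show ((n:ℝ) * Real.log n) = Real.log n * n by ring]
  rw [← Real.rpow_def_of_pos hk0, ← Real.rpow_def_of_pos hb0, ← Real.rpow_def_of_pos hn0]
  rw [show ((n:ℝ) - k) = ((n-k:ℕ):ℝ) from hb.symm]
  rw [Real.rpow_natCast, Real.rpow_natCast, Real.rpow_natCast]
  ring

lemma stirling_pos (m : ℕ) (hm : 1 ≤ m) : 0 < Stirling.stirlingSeq m := by
  obtain ⟨m', rfl⟩ := Nat.exists_eq_add_of_le hm
  simpa [Nat.add_comm] using Stirling.stirlingSeq'_pos m'

open Stirling in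
lemma main_id (n k : ℕ) (hk1 : 1 ≤ k) (hk2 : k < n) :
    (n.choose k : ℝ) * Real.exp (-(n : ℝ) * binEnt ((k : ℝ) / n))
        * Real.sqrt (2 * k * ((n : ℝ) - k) / n)
      = stirlingSeq n / (stirlingSeq k * stirlingSeq (n - k)) := by
  have hk0 : (0:ℝ) < k := by exact_mod_cast hk1
  have hn0 : (0:ℝ) < n := by exact_mod_cast Nat.lt_of_lt_of_le Nat.zero_lt_one (hk1.trans hk2.le)
  have hb : ((n - k : ℕ) : ℝ) = (n:ℝ) - k := by push_cast [Nat.cast_sub hk2.le]; ring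
  have hb0 : (0:ℝ) < ((n-k:ℕ):ℝ) := by
    rw [hb]
    have : (k:ℝ) < n := by exact_mod_cast hk2
    linarith
  have hfk : (0:ℝ) < (Nat.factorial k : ℝ) := by exact_mod_cast Nat.factorial_pos k
  have hfb : (0:ℝ) < (Nat.factorial (n-k) : ℝ) := by exact_mod_cast Nat.factorial_pos (n-k)
  have hfn : (0:ℝ) < (Nat.factorial n : ℝ) := by exact_mod_cast Nat.factorial_pos n
  have he : (0:ℝ) < Real.exp 1 := Real.exp_pos 1
  have hchoose : (n.choose k : ℝ) * (Nat.factorial k : ℝ) * (Nat.factorial (n-k) : ℝ) = (Nat.factorial n : ℝ) := by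
    exact_mod_cast congrArg Nat.cast (Nat.choose_mul_factorial_mul_factorial hk2.le)
  have hsq : Real.sqrt (2 * k * ((n:ℝ) - k) / n) * Real.sqrt (2*(n:ℝ)) =
      Real.sqrt (2*(k:ℝ)) * Real.sqrt (2*((n-k:ℕ):ℝ)) := by
    have hnn : (0:ℝ) ≤ 2 * k * ((n:ℝ) - k) / n := by
      have := hb0; rw [hb] at this
      exact div_nonneg (by nlinarith) hn0.le
    rw [← Real.sqrt_mul hnn, ← Real.sqrt_mul (by positivity)]
    congr 1
    rw [hb]; field_simp
  have hpow : Real.exp 1 ^ k * Real.exp 1 ^ (n-k) = Real.exp 1 ^ n := by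
    rw [← pow_add]; congr 1; omega
  have hsn : (0:ℝ) < Real.sqrt (2*(n:ℝ)) := Real.sqrt_pos.2 (by positivity)
  have hsk : (0:ℝ) < Real.sqrt (2*(k:ℝ)) := Real.sqrt_pos.2 (by positivity)
  have hsb : (0:ℝ) < Real.sqrt (2*((n-k:ℕ):ℝ)) := Real.sqrt_pos.2 (by positivity)
  have hpk := stirling_pos k hk1
  have hpb := stirling_pos (n-k) (by omega)
  rw [exp_ent n k hk1 hk2]
  rw [eq_div_iff (mul_pos hpk hpb).ne']
  rw [Stirling.stirlingSeq, Stirling.stirlingSeq, Stirling.stirlingSeq]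
  rw [div_pow, div_pow, div_pow]
  field_simp
  have hexp : Real.exp (k:ℝ) * Real.exp ((n-k:ℕ):ℝ) = Real.exp (n:ℝ) := by
    rw [← Real.exp_add]; congr 1; rw [hb]; ring
  linear_combination (Real.exp 1 ^ k * Real.exp 1 ^ (n-k) * (Real.sqrt (2 * k * ((n:ℝ) - k) / n) * Real.sqrt (2*(n:ℝ)))) * hchoose + ((Nat.factorial n : ℝ) * (Real.sqrt (2 * k * ((n:ℝ) - k) / n) * Real.sqrt (2*(n:ℝ)))) * hpow + ((Nat.factorial n : ℝ) * Real.exp 1 ^ n) * hsq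

lemma stirling_anti {a b : ℕ} (ha : 1 ≤ a) (hab : a ≤ b) :
    Stirling.stirlingSeq b ≤ Stirling.stirlingSeq a := by
  obtain ⟨a', rfl⟩ := Nat.exists_eq_add_of_le ha
  obtain ⟨b', rfl⟩ := Nat.exists_eq_add_of_le (ha.trans hab)
  have h : a' ≤ b' := by omega
  simpa [Nat.add_comm] using Stirling.stirlingSeq'_antitone h

lemma sqrt_pi_le (m : ℕ) (hm : 1 ≤ m) : Real.sqrt π ≤ Stirling.stirlingSeq m :=
  le_of_tendsto Stirling.tendsto_stirlingSeq_sqrt_pi (by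
    filter_upwards [Filter.eventually_ge_atTop m] with j hj
    exact stirling_anti hm hj)

lemma s2val : Stirling.stirlingSeq 2 = Real.exp 1 ^ 2 / 4 := by
  rw [Stirling.stirlingSeq]
  have h4 : Real.sqrt (2*((2:ℕ):ℝ)) = 2 := by
    rw [show (2*((2:ℕ):ℝ)) = 2^2 by norm_num, Real.sqrt_sq (by norm_num)]
  rw [h4, div_pow]
  have he : Real.exp 1 ≠ 0 := (Real.exp_pos 1).ne'
  norm_num [Nat.factorial]
  field_simp

lemma s3val : Stirling.stirlingSeq 3 = 2 * Real.exp 1 ^ 3 / (9 * Real.sqrt 6) := by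
  rw [Stirling.stirlingSeq]
  have h6 : (2*((3:ℕ):ℝ)) = 6 := by norm_num
  rw [h6, div_pow]
  have he : Real.exp 1 ≠ 0 := (Real.exp_pos 1).ne'
  have hs : Real.sqrt 6 ≠ 0 := (Real.sqrt_pos.2 (by norm_num)).ne'
  norm_num [Nat.factorial]
  field_simp
  ring

lemma e8_lt : Real.exp 1 ^ 8 < 2981 := by
  have h1 : Real.exp 1 < 2.7182818286 := Real.exp_one_lt_d9
  have h0 : (0:ℝ) < Real.exp 1 := Real.exp_pos 1
  have h2 : Real.exp 1 ^ 2 < 7.3890562 := by nlinarith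
  have h4 : Real.exp 1 ^ 4 < 54.59816 := by nlinarith
  have hpos : (0:ℝ) < 54.59816 + Real.exp 1 ^ 4 := by positivity
  nlinarith [hpos, h4]

lemma nB : Stirling.stirlingSeq 2 * Stirling.stirlingSeq 2 ≤ 2 * Real.sqrt π := by
  rw [s2val]
  have hp : Real.sqrt π ^ 2 = π := Real.sq_sqrt Real.pi_pos.le
  have hpn : (0:ℝ) ≤ Real.sqrt π := Real.sqrt_nonneg π
  have hpi : 3.141592 < π := Real.pi_gt_d6
  have he8 := e8_lt
  have h0 : (0:ℝ) < Real.exp 1 := Real.exp_pos 1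
  have key : Real.exp 1 ^ 4 ≤ 32 * Real.sqrt π := by
    nlinarith [sq_nonneg (Real.exp 1 ^ 4 + 32 * Real.sqrt π), pow_pos h0 4, pow_pos h0 8]
  nlinarith

lemma nA : Stirling.stirlingSeq 1 * Stirling.stirlingSeq 3 ≤ 2 * Real.sqrt π := by
  rw [Stirling.stirlingSeq_one, s3val]
  have hp : Real.sqrt π ^ 2 = π := Real.sq_sqrt Real.pi_pos.le
  have hpn : (0:ℝ) ≤ Real.sqrt π := Real.sqrt_nonneg π
  have hpi : 3.141592 < π := Real.pi_gt_d6
  have he8 := e8_lt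
  have h0 : (0:ℝ) < Real.exp 1 := Real.exp_pos 1
  have h2 : Real.sqrt 2 ^ 2 = 2 := Real.sq_sqrt (by norm_num)
  have h6 : Real.sqrt 6 ^ 2 = 6 := Real.sq_sqrt (by norm_num)
  have h2p : (0:ℝ) < Real.sqrt 2 := Real.sqrt_pos.2 (by norm_num)
  have h6p : (0:ℝ) < Real.sqrt 6 := Real.sqrt_pos.2 (by norm_num)
  rw [div_mul_div_comm, div_le_iff₀ (by positivity)]
  -- goal : e * (2*e^3) ≤ 2√π * (√2 * (9*√6))
  have key : Real.exp 1 ^ 4 ≤ 9 * (Real.sqrt π * (Real.sqrt 2 * Real.sqrt 6)) := by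
    nlinarith [sq_nonneg (Real.exp 1 ^ 4 + 9 * (Real.sqrt π * (Real.sqrt 2 * Real.sqrt 6))),
      pow_pos h0 4, pow_pos h0 8, mul_pos h2p h6p, mul_pos (Real.sqrt_pos.2 Real.pi_pos) (mul_pos h2p h6p),
      sq_nonneg (Real.sqrt 2 * Real.sqrt 6), sq_nonneg (Real.sqrt π * (Real.sqrt 2 * Real.sqrt 6))]
  nlinarith [key]

lemma nD : Stirling.stirlingSeq 1 * Stirling.stirlingSeq 1 ≤ 2 * Stirling.stirlingSeq 2 := by
  rw [Stirling.stirlingSeq_one, s2val]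
  have h2 : Real.sqrt 2 * Real.sqrt 2 = 2 := Real.mul_self_sqrt (by norm_num)
  rw [div_mul_div_comm, h2]
  apply le_of_eq
  ring

lemma nC : Stirling.stirlingSeq 1 * Stirling.stirlingSeq 2 ≤ 2 * Stirling.stirlingSeq 3 := by
  rw [Stirling.stirlingSeq_one, s2val, s3val]
  have h2p : (0:ℝ) < Real.sqrt 2 := Real.sqrt_pos.2 (by norm_num)
  have h6p : (0:ℝ) < Real.sqrt 6 := Real.sqrt_pos.2 (by norm_num)
  have h0 : (0:ℝ) < Real.exp 1 := Real.exp_pos 1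
  have h96 : 9 * Real.sqrt 6 ≤ 16 * Real.sqrt 2 := by
    have h := Real.sqrt_le_sqrt (by norm_num : (486:ℝ) ≤ 512)
    rw [show (486:ℝ) = 9^2*6 by norm_num, show (512:ℝ) = 16^2*2 by norm_num,
      Real.sqrt_mul (by positivity), Real.sqrt_mul (by positivity),
      Real.sqrt_sq (by norm_num), Real.sqrt_sq (by norm_num)] at h
    exact h
  have hR : 2*(2*Real.exp 1^3/(9*Real.sqrt 6)) = (4*Real.exp 1^3)/(9*Real.sqrt 6) := by ring
  rw [hR, div_mul_div_comm, div_le_div_iff₀ (by positivity) (by positivity)]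
  nlinarith [mul_le_mul_of_nonneg_left h96 (by positivity : (0:ℝ) ≤ Real.exp 1 ^ 3)]

lemma lower_key (k b : ℕ) (hk : 1 ≤ k) (hkb : k ≤ b) :
    Stirling.stirlingSeq k * Stirling.stirlingSeq b ≤ 2 * Stirling.stirlingSeq (k + b) := by
  have hb1 : 1 ≤ b := hk.trans hkb
  have hsp := sqrt_pi_le (k+b) (by omega)
  have hpb := stirling_pos b hb1
  have hpk := stirling_pos k hk
  rcases Nat.lt_or_ge k 2 with hk2 | hk2
  · have hk1 : k = 1 := by omega
    subst hk1
    rcases (by omega : b = 1 ∨ b = 2 ∨ 3 ≤ b) with rfl | rfl | hb3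
    · exact nD
    · exact nC
    · calc Stirling.stirlingSeq 1 * Stirling.stirlingSeq b
          ≤ Stirling.stirlingSeq 1 * Stirling.stirlingSeq 3 := by
            have := stirling_anti (by norm_num : 1 ≤ 3) hb3
            have h1 := stirling_pos 1 le_rfl
            nlinarith
        _ ≤ 2 * Real.sqrt π := nA
        _ ≤ 2 * Stirling.stirlingSeq (1 + b) := by linarith
  · calc Stirling.stirlingSeq k * Stirling.stirlingSeq b
        ≤ Stirling.stirlingSeq 2 * Stirling.stirlingSeq 2 := by
          have h1 := stirling_anti (by norm_num : 1 ≤ 2) hk2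
          have h2 := stirling_anti (by norm_num : 1 ≤ 2) (hk2.trans hkb)
          have hp2 := stirling_pos 2 (by norm_num)
          nlinarith
      _ ≤ 2 * Real.sqrt π := nB
      _ ≤ 2 * Stirling.stirlingSeq (k + b) := by linarith

/-- Standard bounds on the binomial coefficient: for `1 ≤ k ≤ n - 1`,
`1/2 ≤ C(n,k)·exp(-n·H(k/n))·√(2k(n-k)/n) ≤ 1/√π`. -/
theorem binomial_entropy_bounds (n k : ℕ) (hk1 : 1 ≤ k) (hk2 : k < n) :
    1 / 2 ≤ (n.choose k : ℝ) * Real.exp (-(n : ℝ) * binEnt ((k : ℝ) / n))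
        * Real.sqrt (2 * k * ((n : ℝ) - k) / n)
    ∧ (n.choose k : ℝ) * Real.exp (-(n : ℝ) * binEnt ((k : ℝ) / n))
        * Real.sqrt (2 * k * ((n : ℝ) - k) / n) ≤ 1 / Real.sqrt π := by
  rw [main_id n k hk1 hk2]
  have hpk := stirling_pos k hk1
  have hpb := stirling_pos (n-k) (by omega)
  have hpn := stirling_pos n (by omega)
  have hlow : Stirling.stirlingSeq k * Stirling.stirlingSeq (n-k) ≤ 2 * Stirling.stirlingSeq n := by
    rcases Nat.le_total k (n-k) with h | h
    · have h2 := lower_key k (n-k) hk1 h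
      rwa [Nat.add_sub_cancel' hk2.le] at h2
    · have h2 := lower_key (n-k) k (by omega) h
      rw [Nat.sub_add_cancel hk2.le] at h2
      rw [mul_comm]; exact h2
  constructor
  · rw [le_div_iff₀ (mul_pos hpk hpb)]
    linarith
  · have hsn : Stirling.stirlingSeq n ≤ Stirling.stirlingSeq k := stirling_anti hk1 hk2.le
    have hsb : Real.sqrt π ≤ Stirling.stirlingSeq (n-k) := sqrt_pi_le _ (by omega)
    have hpp : (0:ℝ) < Real.sqrt π := Real.sqrt_pos.2 Real.pi_pos
    rw [div_le_div_iff₀ (mul_pos hpk hpb) hpp]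
    nlinarith [mul_le_mul hsn hsb hpp.le hpk.le]
end

section
/- Let p ∈ (0,1), and r, N ∈ ℕ with 2 ≤ r < N. Let τ₁,…,τ_r be i.i.d. geometric with success probability 1-p. Then P(τ₁+⋯+τ_r > N) ≥ (1-p)√N · exp(-N·D((r-1)/N ‖ 1-p)) / √(8(r-1)(N-r+1)). -/
open MeasureTheory ProbabilityTheory Real

/-- Binary Kullback–Leibler divergence (natural logarithm). -/
noncomputable def klBin (a b : ℝ) : ℝ := a * Real.log (a / b) + (1 - a) * Real.log ((1 - a) / (1 - b))

lemma card_antidiagonalTuple (r M : ℕ) :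
    (Finset.Nat.antidiagonalTuple r M).card = (M + r - 1).choose M := by
  rw [← Fintype.card_coe]
  have e : { v // v ∈ Finset.Nat.antidiagonalTuple r M } ≃ Sym (Fin r) M :=
    Equiv.subtypeEquiv
      ((Finsupp.equivFunOnFinite (α := Fin r) (M := ℕ)).symm.trans
        (Multiset.toFinsupp (α := Fin r)).symm.toEquiv)
      (fun v => by
        rw [Finset.Nat.mem_antidiagonalTuple]
        simp only [Equiv.trans_apply, AddEquiv.toEquiv_eq_coe, EquivLike.coe_coe]
        rw [show ((Multiset.toFinsupp (α := Fin r)).symm (Finsupp.equivFunOnFinite.symm v))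
            = Finsupp.toMultiset (Finsupp.equivFunOnFinite.symm v) from rfl]
        rw [Finsupp.card_toMultiset, Finsupp.sum_fintype _ _ (fun _ => rfl)]
        simp [Finsupp.equivFunOnFinite]
        exact Iff.rfl)
  rw [Fintype.card_congr e, Sym.card_sym_eq_choose, Fintype.card_fin, Nat.add_comm r M]
lemma binom4 (x K : ℕ) (hK : 3 ≤ K) :
    x^K + K * x^(K-1) + K.choose 2 * x^(K-2) + K.choose 3 * x^(K-3) ≤ (x+1)^K := by
  have hsub : ({K-3, K-2, K-1, K} : Finset ℕ) ⊆ Finset.range (K+1) := by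
    intro j hj; simp at hj; rcases hj with h|h|h|h <;> simp [h] <;> omega
  calc x^K + K * x^(K-1) + K.choose 2 * x^(K-2) + K.choose 3 * x^(K-3)
      = ∑ j ∈ ({K-3, K-2, K-1, K} : Finset ℕ), x ^ j * 1 ^ (K - j) * K.choose j := by
        rw [Finset.sum_insert (by simp; omega), Finset.sum_insert (by simp; omega),
          Finset.sum_insert (by simp; omega), Finset.sum_singleton]
        have h1 : K.choose (K-1) = K := by
          rw [Nat.choose_symm (by omega : 1 ≤ K), Nat.choose_one_right]
        have h2 : K.choose (K-2) = K.choose 2 := Nat.choose_symm (by omega : 2 ≤ K)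
        have h3 : K.choose (K-3) = K.choose 3 := Nat.choose_symm (by omega : 3 ≤ K)
        simp [h1, h2, h3, Nat.choose_self]
        ring
    _ ≤ ∑ j ∈ Finset.range (K+1), x ^ j * 1 ^ (K - j) * K.choose j :=
        Finset.sum_le_sum_of_subset hsub
    _ = (x+1)^K := (add_pow x 1 K).symm

lemma T1 (m : ℕ) (hm : 1 ≤ m) :
    m^(2*m+1) * (m+2)^(2*m+3) ≤ (m+1)^(4*m+4) := by
  obtain ⟨t, rfl⟩ : ∃ t, m = t + 1 := ⟨m - 1, by omega⟩
  set m := t + 1 with hmdef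
  set A := m * (m + 2) with hA
  have hc2 : (2*m+1).choose 2 = (2*m+1) * m := by
    have h := Nat.descFactorial_eq_factorial_mul_choose (2*m+1) 2
    rw [Nat.descFactorial_succ, Nat.descFactorial_succ, Nat.descFactorial_zero] at h
    have e1 : 2*m+1 - 1 = 2*m := by omega
    have e0 : 2*m+1 - 0 = 2*m+1 := by omega
    rw [e1, e0, mul_one] at h
    have hf2 : Nat.factorial 2 = 2 := rfl
    rw [hf2] at h
    have h2 : 2 * (2*m * (2*m+1)) = 2 * ((2*m+1)*m*2) := by ring
    omega
  have hc3 : 3 * (2*m+1).choose 3 = m * ((2*m-1) * (2*m+1)) := by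
    have h := Nat.descFactorial_eq_factorial_mul_choose (2*m+1) 3
    rw [Nat.descFactorial_succ, Nat.descFactorial_succ, Nat.descFactorial_succ,
      Nat.descFactorial_zero] at h
    have e2 : 2*m+1 - 2 = 2*m-1 := by omega
    have e1 : 2*m+1 - 1 = 2*m := by omega
    have e0 : 2*m+1 - 0 = 2*m+1 := by omega
    rw [e2, e1, e0, mul_one] at h
    have hf3 : Nat.factorial 3 = 6 := rfl
    rw [hf3] at h
    have : (2*m-1) * (2*m * (2*m+1)) = 2 * (m * ((2*m-1)*(2*m+1))) := by
      have e : 2*m-1 = 2*t+1 := by omega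
      rw [e]; ring
    omega
  have key : A^3 * (m+2)^2
      ≤ (A+1) * (A^3 + (2*m+1)*A^2 + (2*m+1).choose 2 * A + (2*m+1).choose 3) := by
    have h3 : 3 * (A^3 * (m+2)^2)
        ≤ 3 * ((A+1) * (A^3 + (2*m+1)*A^2 + (2*m+1).choose 2 * A + (2*m+1).choose 3)) := by
      have expand : 3 * ((A+1) * (A^3 + (2*m+1)*A^2 + (2*m+1).choose 2 * A + (2*m+1).choose 3))
          = (A+1) * (3*A^3 + 3*(2*m+1)*A^2 + 3*((2*m+1).choose 2) * A + 3*((2*m+1).choose 3)) := by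
        ring
      rw [expand, hc3, hc2]
      have h2m1 : 2*m-1 = 2*t+1 := by omega
      rw [h2m1, hA, hmdef]
      nlinarith [sq_nonneg t, t.zero_le]
    omega
  have hbin := binom4 A (2*m+1) (by omega)
  have epow : (m+1)^(4*m+4) = (A+1) * (A+1)^(2*m+1) := by
    have e : A + 1 = (m+1)^2 := by rw [hA]; ring
    rw [e, ← pow_mul, ← pow_add]
    congr 1; omega
  have eL : m^(2*m+1) * (m+2)^(2*m+3) = (A^3 * (m+2)^2) * A^(2*m-2) := by
    have hmp : m^(2*m+1) * (m+2)^(2*m+1) = A^(2*m+1) := by rw [hA, mul_pow]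
    calc m^(2*m+1) * (m+2)^(2*m+3)
        = (m^(2*m+1) * (m+2)^(2*m+1)) * (m+2)^2 := by
          rw [mul_assoc, ← pow_add]
      _ = A^(2*m+1) * (m+2)^2 := by rw [hmp]
      _ = (A^3 * (m+2)^2) * A^(2*m-2) := by
          rw [show 2*m+1 = 3 + (2*m-2) by omega, pow_add]; ring
  have eR : A^(2*m+1) + (2*m+1) * A^(2*m+1-1) + (2*m+1).choose 2 * A^(2*m+1-2)
        + (2*m+1).choose 3 * A^(2*m+1-3)
      = (A^3 + (2*m+1)*A^2 + (2*m+1).choose 2 * A + (2*m+1).choose 3) * A^(2*m-2) := by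
    have e0 : A^(2*m+1) = A^3 * A^(2*m-2) := by rw [← pow_add]; congr 1; omega
    have e1 : A^(2*m+1-1) = A^2 * A^(2*m-2) := by rw [← pow_add]; congr 1; omega
    have e2 : A^(2*m+1-2) = A^1 * A^(2*m-2) := by rw [← pow_add]; congr 1; omega
    have e3 : A^(2*m+1-3) = A^(2*m-2) := by congr 1 <;> omega
    rw [e0, e1, e2, e3]; ring
  calc m^(2*m+1) * (m+2)^(2*m+3)
      = (A^3 * (m+2)^2) * A^(2*m-2) := eL
    _ ≤ ((A+1) * (A^3 + (2*m+1)*A^2 + (2*m+1).choose 2 * A + (2*m+1).choose 3)) * A^(2*m-2) :=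
        Nat.mul_le_mul_right _ key
    _ = (A+1) * ((A^3 + (2*m+1)*A^2 + (2*m+1).choose 2 * A + (2*m+1).choose 3) * A^(2*m-2)) := by
        ring
    _ = (A+1) * (A^(2*m+1) + (2*m+1) * A^(2*m+1-1) + (2*m+1).choose 2 * A^(2*m+1-2)
          + (2*m+1).choose 3 * A^(2*m+1-3)) := by rw [eR]
    _ ≤ (A+1) * (A+1)^(2*m+1) := Nat.mul_le_mul_left _ hbin
    _ = (m+1)^(4*m+4) := epow.symm
lemma cb_lower : ∀ k : ℕ, 1 ≤ k → 16 ^ k ≤ 4 * k * (Nat.centralBinom k) ^ 2 := by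
  intro k hk
  induction k with
  | zero => omega
  | succ n ih =>
    rcases Nat.eq_or_lt_of_le hk with h | h
    · simp [← h, Nat.centralBinom]
    · have hn : 1 ≤ n := by omega
      have ihn := ih hn
      -- (n+1) * centralBinom (n+1) = 2 * (2n+1) * centralBinom n
      have key := Nat.succ_mul_centralBinom_succ n
      -- want: 16^(n+1) ≤ 4(n+1) C(n+1)²
      -- multiply both sides by (n+1)²:
      have h1 : 16 ^ (n+1) * (n+1)^2 ≤ 4 * (n+1) * (Nat.centralBinom (n+1))^2 * (n+1)^2 := by
        have e : 4 * (n+1) * (Nat.centralBinom (n+1))^2 * (n+1)^2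
            = 4 * (n+1) * ((n+1) * Nat.centralBinom (n+1))^2 := by ring
        rw [e, key]
        have : 16 ^ (n+1) * (n+1)^2 = 16 * (n+1)^2 * 16^n := by ring
        rw [this]
        calc 16 * (n+1)^2 * 16^n ≤ 16 * (n+1)^2 * (4 * n * (Nat.centralBinom n)^2) :=
              Nat.mul_le_mul_left _ ihn
          _ ≤ 4 * (n+1) * (2 * (2*n+1) * Nat.centralBinom n)^2 := by
              have hq : 16 * (n+1)^2 * (4 * n) ≤ 4 * (n+1) * (2 * (2*n+1))^2 := by nlinarith
              nlinarith [sq_nonneg (Nat.centralBinom n)]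
      exact Nat.le_of_mul_le_mul_right h1 (by positivity)
lemma Tchain (m : ℕ) (hm : 1 ≤ m) : ∀ n, m ≤ n →
    m^(2*m+1) * (n+1)^(2*n+1) ≤ (m+1)^(2*m+1) * n^(2*n+1) := by
  intro n hn
  induction n, hn using Nat.le_induction with
  | base => rw [mul_comm]
  | succ n hmn ih =>
    have hT1 := T1 n (by omega)
    have step1 : m^(2*m+1) * (n+2)^(2*n+3) * (n+1)^(2*n+1)
        ≤ (m+1)^(2*m+1) * (n+1)^(2*n+3) * (n+1)^(2*n+1) := by
      calc m^(2*m+1) * (n+2)^(2*n+3) * (n+1)^(2*n+1)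
          = (m^(2*m+1) * (n+1)^(2*n+1)) * (n+2)^(2*n+3) := by ring
        _ ≤ ((m+1)^(2*m+1) * n^(2*n+1)) * (n+2)^(2*n+3) := Nat.mul_le_mul_right _ ih
        _ = (m+1)^(2*m+1) * (n^(2*n+1) * (n+2)^(2*n+3)) := by ring
        _ ≤ (m+1)^(2*m+1) * (n+1)^(4*n+4) := Nat.mul_le_mul_left _ hT1
        _ = (m+1)^(2*m+1) * (n+1)^(2*n+3) * (n+1)^(2*n+1) := by
            rw [mul_assoc, ← pow_add]; congr 2; omega
    have hcan := Nat.le_of_mul_le_mul_right step1 (by positivity)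
    calc m^(2*m+1) * (n+1+1)^(2*(n+1)+1)
        = m^(2*m+1) * (n+2)^(2*n+3) := by congr 2 <;> omega
      _ ≤ (m+1)^(2*m+1) * (n+1)^(2*n+3) := hcan
      _ = (m+1)^(2*m+1) * (n+1)^(2*(n+1)+1) := by congr 2 <;> omega

lemma NLaux (k : ℕ) (hk : 1 ≤ k) : ∀ m, k ≤ m →
    (k+m)^(2*(k+m)+1) ≤ 8*k*m * ((k+m).choose k)^2 * k^(2*k) * m^(2*m) := by
  intro m hm
  induction m, hm using Nat.le_induction with
  | base =>
    have hcb := cb_lower k hk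
    have hc : (k+k).choose k = Nat.centralBinom k := by
      rw [Nat.centralBinom]; congr 1; omega
    have eL : (k+k)^(2*(k+k)+1) = (2^(4*k+1) * k) * k^(4*k) := by
      rw [show k+k = 2*k by omega, show 2*(2*k)+1 = 4*k+1 by omega, mul_pow, pow_succ]
      ring
    have eR : 8*k*k * ((k+k).choose k)^2 * k^(2*k) * k^(2*k)
        = (8*k*k*(Nat.centralBinom k)^2) * k^(4*k) := by
      rw [hc, mul_assoc, ← pow_add, show 2*k+2*k = 4*k by omega]
    rw [eL, eR]
    apply Nat.mul_le_mul_right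
    calc 2^(4*k+1) * k = 2*k * 16^k := by
          rw [show (16:ℕ) = 2^4 by norm_num, ← pow_mul, pow_succ]; ring
      _ ≤ 2*k * (4*k*(Nat.centralBinom k)^2) := Nat.mul_le_mul_left _ hcb
      _ = 8*k*k*(Nat.centralBinom k)^2 := by ring
  | succ m hkm ih =>
    have hT := Tchain m (by omega) (k+m) (by omega)
    have hid : (m+1) * ((k+m+1).choose k) = (k+m+1) * ((k+m).choose k) := by
      have h1 := Nat.add_one_mul_choose_eq (k+m) m
      have e1 : (k+m).choose m = (k+m).choose k := by
        have h := Nat.choose_symm (n := k+m) (k := k) (by omega)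
        rwa [show k+m-k = m from by omega] at h
      have e2 : (k+m+1).choose (m+1) = (k+m+1).choose k := by
        have h := Nat.choose_symm (n := k+m+1) (k := k) (by omega)
        rwa [show k+m+1-k = m+1 from by omega] at h
      rw [e1, e2] at h1
      calc (m+1) * ((k+m+1).choose k) = (k+m+1).choose k * (m+1) := by ring
        _ = (k+m+1) * ((k+m).choose k) := by rw [← h1]
    -- abbreviations
    have step : (k+m+1)^(2*(k+m+1)+1) * (m^(2*m+1) * (k+m)^(2*(k+m)+1))
        ≤ (8*k*(m+1) * ((k+m+1).choose k)^2 * k^(2*k) * (m+1)^(2*(m+1)))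
            * (m^(2*m+1) * (k+m)^(2*(k+m)+1)) := by
      calc (k+m+1)^(2*(k+m+1)+1) * (m^(2*m+1) * (k+m)^(2*(k+m)+1))
          = (k+m+1)^2 * (k+m)^(2*(k+m)+1) * (m^(2*m+1) * (k+m+1)^(2*(k+m)+1)) := by
            rw [show 2*(k+m+1)+1 = 2 + (2*(k+m)+1) by omega, pow_add]; ring
        _ ≤ (k+m+1)^2 * (k+m)^(2*(k+m)+1) * ((m+1)^(2*m+1) * (k+m)^(2*(k+m)+1)) := by
            apply Nat.mul_le_mul_left
            calc m^(2*m+1) * (k+m+1)^(2*(k+m)+1)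
                = m^(2*m+1) * ((k+m)+1)^(2*(k+m)+1) := by norm_num
              _ ≤ (m+1)^(2*m+1) * (k+m)^(2*(k+m)+1) := hT
        _ = (m+1)^(2*m+1) * (k+m)^(2*(k+m)+1) * ((k+m+1)^2 * (k+m)^(2*(k+m)+1)) := by ring
        _ ≤ (m+1)^(2*m+1) * (k+m)^(2*(k+m)+1)
              * ((k+m+1)^2 * (8*k*m * ((k+m).choose k)^2 * k^(2*k) * m^(2*m))) := by
            exact Nat.mul_le_mul_left _ (Nat.mul_le_mul_left _ ih)
        _ = (8*k * (((k+m+1) * ((k+m).choose k)))^2 * k^(2*k) * (m+1)^(2*m+1))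
              * (m^(2*m+1) * (k+m)^(2*(k+m)+1)) := by
            rw [pow_succ m (2*m)]
            ring
        _ = (8*k * (((m+1) * ((k+m+1).choose k)))^2 * k^(2*k) * (m+1)^(2*m+1))
              * (m^(2*m+1) * (k+m)^(2*(k+m)+1)) := by rw [hid]
        _ = (8*k*(m+1) * ((k+m+1).choose k)^2 * k^(2*k) * (m+1)^(2*(m+1)))
              * (m^(2*m+1) * (k+m)^(2*(k+m)+1)) := by
            rw [show 2*(m+1) = 2*m+1+1 by omega, pow_succ, pow_succ]
            ring
    have hcan := Nat.le_of_mul_le_mul_right step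
      (Nat.mul_pos (pow_pos (by omega) _) (pow_pos (by omega) _))
    rw [show k+(m+1) = k+m+1 from by omega]
    exact hcan
lemma NL (k m : ℕ) (hk : 1 ≤ k) (hm : 1 ≤ m) :
    (k+m)^(2*(k+m)+1) ≤ 8*k*m * ((k+m).choose k)^2 * k^(2*k) * m^(2*m) := by
  rcases le_total k m with h | h
  · exact NLaux k hk m h
  · have := NLaux m hm k h
    have hsym : (m+k).choose m = (k+m).choose k := by
      rw [show m+k = k+m from by omega]
      have h2 := Nat.choose_symm (n := k+m) (k := k) (by omega)
      rwa [show k+m-k = m from by omega] at h2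
    calc (k+m)^(2*(k+m)+1) = (m+k)^(2*(m+k)+1) := by rw [show k+m = m+k from by omega]
      _ ≤ 8*m*k * ((m+k).choose m)^2 * m^(2*m) * k^(2*k) := this
      _ = 8*k*m * ((k+m).choose k)^2 * k^(2*k) * m^(2*m) := by rw [hsym]; ring

lemma sqrt_sq_mul (A c : ℝ) (hA : 0 ≤ A) : Real.sqrt (A^2 * c) = A * Real.sqrt c := by
  rw [Real.sqrt_mul (sq_nonneg A), Real.sqrt_sq hA]

lemma L1 (k m : ℕ) (hk : 1 ≤ k) (hm : 1 ≤ m) :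
    ((k+m : ℕ) : ℝ)^(k+m) * Real.sqrt (k+m : ℕ)
      ≤ ((k+m).choose k : ℝ) * (k:ℝ)^k * (m:ℝ)^m * Real.sqrt (8*k*m) := by
  have hnat := NL k m hk hm
  have hcast : (((k+m) : ℕ) : ℝ)^(2*(k+m)+1)
      ≤ (8*k*m : ℝ) * ((k+m).choose k : ℝ)^2 * (k:ℝ)^(2*k) * (m:ℝ)^(2*m) := by
    exact_mod_cast hnat
  have hL : (((k+m):ℕ):ℝ)^(k+m) * Real.sqrt ((k+m):ℕ)
      = Real.sqrt ((((k+m):ℕ):ℝ)^(2*(k+m)+1)) := by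
    rw [show (((k+m):ℕ):ℝ)^(2*(k+m)+1) = ((((k+m):ℕ):ℝ)^(k+m))^2 * (((k+m):ℕ):ℝ) from by ring]
    rw [sqrt_sq_mul _ _ (by positivity)]
  have hR : ((k+m).choose k : ℝ) * (k:ℝ)^k * (m:ℝ)^m * Real.sqrt (8*k*m)
      = Real.sqrt ((8*k*m : ℝ) * ((k+m).choose k : ℝ)^2 * (k:ℝ)^(2*k) * (m:ℝ)^(2*m)) := by
    rw [show (8*(k:ℝ)*m) * ((k+m).choose k : ℝ)^2 * (k:ℝ)^(2*k) * (m:ℝ)^(2*m)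
        = (((k+m).choose k : ℝ) * (k:ℝ)^k * (m:ℝ)^m)^2 * (8*(k:ℝ)*m) from by ring]
    rw [sqrt_sq_mul _ _ (by positivity)]
  rw [hL, hR]
  exact Real.sqrt_le_sqrt hcast

lemma klBin_exp (p : ℝ) (hp0 : 0 < p) (hp1 : p < 1) (k m : ℕ) (hk : 1 ≤ k) (hm : 1 ≤ m) :
    Real.exp (-((k+m : ℕ) : ℝ) * klBin ((k:ℝ)/((k+m:ℕ):ℝ)) (1-p))
      = (1-p)^k * p^m * (((k+m:ℕ)):ℝ)^(k+m) / ((k:ℝ)^k * (m:ℝ)^m) := by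
  set N : ℝ := ((k+m : ℕ) : ℝ) with hN
  have hNpos : 0 < N := by rw [hN]; push_cast; positivity
  have hkpos : (0:ℝ) < k := by exact_mod_cast hk
  have hmpos : (0:ℝ) < m := by exact_mod_cast hm
  have hq : (0:ℝ) < 1 - p := by linarith
  set a : ℝ := (k:ℝ)/N with ha
  have h1a : 1 - a = (m:ℝ)/N := by
    rw [ha, hN]; push_cast; field_simp; ring
  have hNa : N * a = k := by rw [ha]; field_simp
  have hNm : N * (1-a) = m := by rw [h1a]; field_simp
  have expand : -N * klBin a (1-p)
      = (k:ℝ) * Real.log ((1-p) * N / k) + (m:ℝ) * Real.log (p * N / m) := by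
    rw [klBin]
    have e1 : (1:ℝ) - (1-p) = p := by ring
    rw [e1]
    have l1 : Real.log (a / (1-p)) = - Real.log ((1-p) * N / k) := by
      rw [← Real.log_inv]
      rw [show ((1-p) * N / (k:ℝ))⁻¹ = a / (1-p) from by rw [ha]; field_simp]
    have l2 : Real.log ((1-a) / p) = - Real.log (p * N / m) := by
      rw [← Real.log_inv]
      rw [show (p * N / (m:ℝ))⁻¹ = (1-a) / p from by rw [h1a]; field_simp]
    rw [l1, l2]
    have : -N * (a * -Real.log ((1-p)*N/k) + (1-a) * -Real.log (p*N/m))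
        = (N*a) * Real.log ((1-p)*N/k) + (N*(1-a)) * Real.log (p*N/m) := by ring
    rw [this, hNa, hNm]
  rw [expand, Real.exp_add]
  rw [← Real.log_pow, ← Real.log_pow, Real.exp_log (by positivity), Real.exp_log (by positivity)]
  rw [div_pow, div_pow, mul_pow, mul_pow]
  rw [hN]
  push_cast
  rw [pow_add]
  field_simp
theorem measure_LB
    {Ω : Type*} [MeasurableSpace Ω] (μ : Measure Ω) [IsProbabilityMeasure μ]
    (p : ℝ) (hp0 : 0 < p) (hp1 : p < 1)
    (r N : ℕ) (hr : 2 ≤ r) (hrN : r < N)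
    (τ : Fin r → Ω → ℕ) (hmeas : ∀ i, Measurable (τ i))
    (hgeo : ∀ i, ∀ k : ℕ, μ {ω | τ i ω = k + 1} = ENNReal.ofReal (p ^ k * (1 - p)))
    (hind : iIndepFun τ μ) :
    (N.choose (r-1) : ℝ) * (p ^ (N+1-r) * (1 - p)^r) ≤ (μ {ω | N < ∑ i, τ i ω}).toReal := by
  set M := N + 1 - r with hM
  have hMr : M + r = N + 1 := by omega
  set F := Finset.Nat.antidiagonalTuple r M with hF
  set E : (Fin r → ℕ) → Set Ω := fun v => ⋂ i, {ω | τ i ω = v i + 1} with hE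
  have hq0 : (0:ℝ) ≤ 1 - p := by linarith
  have h1 : ∀ v : Fin r → ℕ, μ (E v) = ∏ i, μ {ω | τ i ω = v i + 1} := by
    intro v
    exact hind.meas_iInter fun i => ⟨{v i + 1}, measurableSet_singleton _, rfl⟩
  have h2 : ∀ v ∈ F, μ (E v) = ENNReal.ofReal (p ^ M * (1-p)^r) := by
    intro v hv
    have hsum : ∑ i, v i = M := by
      rwa [hF, Finset.Nat.mem_antidiagonalTuple] at hv
    rw [h1 v]
    have : ∀ i : Fin r, μ {ω | τ i ω = v i + 1} = ENNReal.ofReal (p ^ v i * (1-p)) :=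
      fun i => hgeo i (v i)
    rw [Finset.prod_congr rfl (fun i _ => this i)]
    rw [← ENNReal.ofReal_prod_of_nonneg (fun i _ => by positivity)]
    congr 1
    rw [Finset.prod_mul_distrib, Finset.prod_const, Finset.prod_pow_eq_pow_sum, hsum]
    simp
  have h4 : ∀ v : Fin r → ℕ, MeasurableSet (E v) := by
    intro v
    exact MeasurableSet.iInter fun i => (hmeas i) (measurableSet_singleton (v i + 1))
  have h3 : (F : Set (Fin r → ℕ)).PairwiseDisjoint E := by
    intro v _ w _ hvw
    obtain ⟨i, hi⟩ : ∃ i, v i ≠ w i := by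
      by_contra h; push_neg at h; exact hvw (funext h)
    refine Set.disjoint_left.2 fun ω hv hw => ?_
    have hv' : τ i ω = v i + 1 := by
      have := Set.mem_iInter.1 hv i; exact this
    have hw' : τ i ω = w i + 1 := by
      have := Set.mem_iInter.1 hw i; exact this
    omega
  have hsub : (⋃ v ∈ F, E v) ⊆ {ω | N < ∑ i, τ i ω} := by
    intro ω hω
    obtain ⟨v, hvF, hv⟩ := Set.mem_iUnion₂.1 hω
    have hsum : ∑ i, v i = M := by
      rwa [hF, Finset.Nat.mem_antidiagonalTuple] at hvF
    have : ∀ i : Fin r, τ i ω = v i + 1 := fun i => Set.mem_iInter.1 hv i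
    have : ∑ i, τ i ω = M + r := by
      rw [Finset.sum_congr rfl (fun i _ => this i), Finset.sum_add_distrib, hsum]
      simp [Finset.card_univ]
    simp only [Set.mem_setOf_eq, this]
    omega
  have hunion : μ (⋃ v ∈ F, E v) = ∑ v ∈ F, μ (E v) :=
    measure_biUnion_finset h3 (fun v _ => h4 v)
  have hcard : F.card = N.choose (r-1) := by
    rw [hF, card_antidiagonalTuple]
    rw [show M + r - 1 = N from by omega]
    have h2 := Nat.choose_symm (n := N) (k := r-1) (by omega)
    rw [show N-(r-1) = M from by omega] at h2
    exact h2
  have hge : ENNReal.ofReal ((N.choose (r-1) : ℝ) * (p ^ M * (1-p)^r)) ≤ μ {ω | N < ∑ i, τ i ω} := by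
    calc ENNReal.ofReal ((N.choose (r-1) : ℝ) * (p ^ M * (1-p)^r))
        = (N.choose (r-1)) * ENNReal.ofReal (p ^ M * (1-p)^r) := by
          rw [ENNReal.ofReal_mul (by positivity)]
          congr 1
          simp [ENNReal.ofReal_natCast]
      _ = F.card * ENNReal.ofReal (p ^ M * (1-p)^r) := by rw [hcard]
      _ = ∑ v ∈ F, ENNReal.ofReal (p ^ M * (1-p)^r) := by
          rw [Finset.sum_const, nsmul_eq_mul]
      _ = ∑ v ∈ F, μ (E v) := (Finset.sum_congr rfl (fun v hv => (h2 v hv).symm))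
      _ = μ (⋃ v ∈ F, E v) := hunion.symm
      _ ≤ μ {ω | N < ∑ i, τ i ω} := measure_mono hsub
  have := ENNReal.toReal_mono (measure_ne_top μ _) hge
  rwa [ENNReal.toReal_ofReal (by positivity)] at this

/-- Lower bound on the arrive-failure probability: for `2 ≤ r < N`,
`P(τ₁+⋯+τ_r > N) ≥ (1-p)·√N·exp(-N·D((r-1)/N ‖ 1-p)) / √(8(r-1)(N-r+1))`. -/
theorem failure_prob_LB
    {Ω : Type*} [MeasurableSpace Ω] (μ : Measure Ω) [IsProbabilityMeasure μ]
    (p : ℝ) (hp0 : 0 < p) (hp1 : p < 1)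
    (r N : ℕ) (hr : 2 ≤ r) (hrN : r < N)
    (τ : Fin r → Ω → ℕ) (hmeas : ∀ i, Measurable (τ i))
    (hzero : ∀ i, μ {ω | τ i ω = 0} = 0)
    (hgeo : ∀ i, ∀ k : ℕ, μ {ω | τ i ω = k + 1} = ENNReal.ofReal (p ^ k * (1 - p)))
    (hind : iIndepFun τ μ) :
    (1 - p) * Real.sqrt N
        * Real.exp (-(N : ℝ) * klBin (((r : ℝ) - 1) / N) (1 - p))
        / Real.sqrt (8 * ((r : ℝ) - 1) * ((N : ℝ) - r + 1))
      ≤ (μ {ω | N < ∑ i, τ i ω}).toReal := by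
  have hmLB := measure_LB μ p hp0 hp1 r N hr hrN τ hmeas hgeo hind
  have hk : 1 ≤ r - 1 := by omega
  have hm : 1 ≤ N + 1 - r := by omega
  have hkm : (r-1) + (N+1-r) = N := by omega
  have hck : (((r-1) : ℕ):ℝ) = (r:ℝ) - 1 := by
    rw [Nat.cast_sub (by omega)]; norm_num
  have hcm : (((N+1-r) : ℕ):ℝ) = (N:ℝ) - r + 1 := by
    rw [Nat.cast_sub (by omega)]; push_cast; ring
  have hexp := klBin_exp p hp0 hp1 (r-1) (N+1-r) hk hm
  rw [hkm] at hexp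
  have hL1 := L1 (r-1) (N+1-r) hk hm
  rw [hkm] at hL1
  have hq : (0:ℝ) < 1 - p := by linarith
  have hkpos : (0:ℝ) < ((r-1 : ℕ):ℝ) := by exact_mod_cast hk
  have hmpos : (0:ℝ) < ((N+1-r : ℕ):ℝ) := by exact_mod_cast hm
  have hNpos : (0:ℝ) < (N:ℝ) := by
    have : 0 < N := by omega
    exact_mod_cast this
  set K : ℝ := ((r-1 : ℕ):ℝ) with hK
  set Mr : ℝ := ((N+1-r : ℕ):ℝ) with hMr
  have hgoalL : (1 - p) * Real.sqrt N
        * Real.exp (-(N : ℝ) * klBin (K / N) (1 - p))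
        / Real.sqrt (8 * K * Mr)
      = (1 - p) * Real.sqrt N
        * ((1-p)^(r-1) * p^(N+1-r) * (N:ℝ)^N / (K^(r-1) * Mr^(N+1-r)))
        / Real.sqrt (8 * K * Mr) := by
    rw [hexp]
  rw [← hck, ← hcm]
  rw [hgoalL]
  have hChoose : (N:ℝ)^N * Real.sqrt (N:ℕ)
      ≤ (N.choose (r-1) : ℝ) * K^(r-1) * Mr^(N+1-r) * Real.sqrt (8*K*Mr) := by
    exact_mod_cast hL1
  have hsqrtpos : (0:ℝ) < Real.sqrt (8*K*Mr) := Real.sqrt_pos.2 (by positivity)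
  have hdiv : (N:ℝ)^N * Real.sqrt N / (K^(r-1) * Mr^(N+1-r) * Real.sqrt (8*K*Mr))
      ≤ (N.choose (r-1) : ℝ) := by
    rw [div_le_iff₀ (by positivity)]
    calc (N:ℝ)^N * Real.sqrt N ≤ (N.choose (r-1) : ℝ) * K^(r-1) * Mr^(N+1-r)
          * Real.sqrt (8*K*Mr) := by
          have : Real.sqrt ((N:ℕ):ℝ) = Real.sqrt (N:ℝ) := by norm_num
          rw [← this]; exact hChoose
      _ = (N.choose (r-1) : ℝ) * (K^(r-1) * Mr^(N+1-r) * Real.sqrt (8*K*Mr)) := by ring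
  have heq : (1 - p) * Real.sqrt N
        * ((1-p)^(r-1) * p^(N+1-r) * (N:ℝ)^N / (K^(r-1) * Mr^(N+1-r)))
        / Real.sqrt (8 * K * Mr)
      = ((1-p)^r * p^(N+1-r))
        * ((N:ℝ)^N * Real.sqrt N / (K^(r-1) * Mr^(N+1-r) * Real.sqrt (8*K*Mr))) := by
    have hrr : (1-p)^r = (1-p) * (1-p)^(r-1) := by
      rw [← pow_succ']; congr 1; omega
    rw [hrr]
    field_simp
  rw [heq]
  calc ((1-p)^r * p^(N+1-r))
        * ((N:ℝ)^N * Real.sqrt N / (K^(r-1) * Mr^(N+1-r) * Real.sqrt (8*K*Mr)))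
      ≤ ((1-p)^r * p^(N+1-r)) * (N.choose (r-1) : ℝ) :=
        mul_le_mul_of_nonneg_left hdiv (by positivity)
    _ = (N.choose (r-1) : ℝ) * (p ^ (N+1-r) * (1 - p)^r) := by ring
    _ ≤ (μ {ω | N < ∑ i, τ i ω}).toReal := hmLB
end

section
/- Let p ∈ (0,1) and α ∈ (0, 1-p). With r = ⌈αN⌉ and τ₁,…,τ_r i.i.d. geometric with success probability 1-p, the limit lim_{N→∞} -(1/N) ln P(τ₁+⋯+τ_r > N) exists and equals D(α ‖ 1-p) = α ln(α/(1-p)) + (1-α) ln((1-α)/p). -/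
open MeasureTheory ProbabilityTheory Real Filter

lemma factLB (n : ℕ) : (n:ℝ)^n * Real.exp (-n) ≤ n.factorial := by
  have h := Real.pow_div_factorial_le_exp (x := (n:ℝ)) (n.cast_nonneg) n
  have hf : (0:ℝ) < n.factorial := by positivity
  rw [div_le_iff₀ hf] at h
  rw [Real.exp_neg]
  rw [mul_comm] at h
  calc (n:ℝ)^n * (Real.exp n)⁻¹ ≤ (n.factorial * Real.exp n) * (Real.exp n)⁻¹ := by gcongr
    _ = n.factorial := by field_simp

lemma factUB : ∀ n : ℕ, 1 ≤ n → (n.factorial : ℝ) ≤ Real.exp 1 * ((n:ℝ)^(n+1) * Real.exp (-n))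
  | 1, _ => by norm_num [Real.exp_neg]
  | (n+2), _ => by
      have ih := factUB (n+1) (by omega)
      have key : Real.exp 1 * ((n+1:ℝ))^(n+2) ≤ ((n+2:ℝ))^(n+2) := by
        have h1 : Real.exp ((1:ℝ)/(n+2)) ≤ (n+2:ℝ)/(n+1) := by
          have h2 : (1:ℝ) - 1/(n+2) ≤ Real.exp (-(1/(n+2))) := by
            have := Real.add_one_le_exp (-(1/(n+2):ℝ)); linarith
          have h3 : (0:ℝ) < 1 - 1/(n+2) := by
            rw [sub_pos]; rw [div_lt_one (by positivity)]
            have : (0:ℝ) ≤ (n:ℝ) := n.cast_nonneg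
            linarith
          have h4 : (1 - 1/(n+2:ℝ)) = (n+1)/(n+2) := by field_simp; ring
          rw [h4] at h2 h3
          calc Real.exp ((1:ℝ)/(n+2)) = (Real.exp (-(1/(n+2:ℝ))))⁻¹ := by
                rw [← Real.exp_neg, neg_neg]
            _ ≤ ((n+1:ℝ)/(n+2))⁻¹ := inv_anti₀ h3 h2
            _ = (n+2:ℝ)/(n+1) := by rw [inv_div]
        have h5 : Real.exp 1 = (Real.exp ((1:ℝ)/(n+2)))^(n+2) := by
          rw [← Real.exp_nat_mul]
          norm_num
          rw [mul_inv_cancel₀ (by positivity : ((n:ℝ)+2) ≠ 0)]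
        calc Real.exp 1 * ((n+1:ℝ))^(n+2) = (Real.exp ((1:ℝ)/(n+2)))^(n+2) * (n+1:ℝ)^(n+2) := by rw [h5]
          _ ≤ ((n+2:ℝ)/(n+1))^(n+2) * (n+1:ℝ)^(n+2) := by gcongr
          _ = ((n+2:ℝ))^(n+2) := by
              rw [div_pow, div_mul_cancel₀]
              positivity
      have hc : ((n+2).factorial : ℝ) = (n+2) * (n+1).factorial := by
        rw [Nat.factorial_succ]; push_cast; ring
      rw [hc]
      calc ((n+2:ℝ)) * (n+1).factorial
          ≤ (n+2:ℝ) * (Real.exp 1 * (((n+1:ℕ):ℝ)^(n+1+1) * Real.exp (-((n+1:ℕ):ℝ)))) := by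
            have h0 : (0:ℝ) ≤ (n:ℝ)+2 := by positivity
            exact mul_le_mul_of_nonneg_left ih h0
        _ ≤ Real.exp 1 * (((n+2:ℕ):ℝ)^(n+2+1) * Real.exp (-((n+2:ℕ):ℝ))) := by
            push_cast
            have hee : Real.exp (-((n:ℝ)+1)) = Real.exp 1 * Real.exp (-((n:ℝ)+2)) := by
              rw [← Real.exp_add]; ring_nf
            rw [hee]
            calc ((n:ℝ)+2) * (Real.exp 1 * (((n:ℝ)+1)^(n+2) * (Real.exp 1 * Real.exp (-((n:ℝ)+2)))))
                = (Real.exp 1 * ((n:ℝ)+1)^(n+2)) * (((n:ℝ)+2) * Real.exp 1 * Real.exp (-((n:ℝ)+2))) := by ring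
              _ ≤ (((n:ℝ)+2)^(n+2)) * (((n:ℝ)+2) * Real.exp 1 * Real.exp (-((n:ℝ)+2))) := by
                  have hpos : (0:ℝ) ≤ ((n:ℝ)+2) * Real.exp 1 * Real.exp (-((n:ℝ)+2)) := by positivity
                  exact mul_le_mul_of_nonneg_right key hpos
              _ = Real.exp 1 * (((n:ℝ)+2)^(n+2+1) * Real.exp (-((n:ℝ)+2))) := by ring

lemma logFact_bounds (n : ℕ) (hn : 1 ≤ n) :
    (n:ℝ) * Real.log n - n ≤ Real.log n.factorial ∧
      Real.log n.factorial ≤ (n:ℝ) * Real.log n - n + (1 + Real.log n) := by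
  have hnp : (0:ℝ) < n := by exact_mod_cast hn
  have hfp : (0:ℝ) < n.factorial := by positivity
  constructor
  · have h := factLB n
    have := Real.log_le_log (by positivity) h
    rwa [Real.log_mul (by positivity) (Real.exp_ne_zero _), Real.log_pow, Real.log_exp] at this
  · have h := factUB n hn
    have := Real.log_le_log hfp h
    rw [Real.log_mul (Real.exp_ne_zero _) (by positivity),
      Real.log_mul (by positivity) (Real.exp_ne_zero _), Real.log_pow, Real.log_exp,
      Real.log_exp] at this
    push_cast at this ⊢
    linarith

lemma logChoose_bound (n k : ℕ) (h1 : 1 ≤ k) (h2 : k < n) :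
    |Real.log (n.choose k) -
        ((n:ℝ) * Real.log n - (k:ℝ) * Real.log k - ((n:ℝ)-(k:ℝ)) * Real.log ((n:ℝ)-(k:ℝ)))|
      ≤ 2 + 2 * Real.log n := by
  have hkn : k ≤ n := h2.le
  have hnk1 : 1 ≤ n - k := by omega
  have hcast : ((n-k:ℕ):ℝ) = (n:ℝ) - (k:ℝ) := by
    exact Nat.cast_sub hkn
  have hCpos : 0 < n.choose k := Nat.choose_pos hkn
  have hfacteq : (n.choose k * (k.factorial * (n-k).factorial) : ℝ) = (n.factorial : ℝ) := by
    exact_mod_cast congrArg (Nat.cast (R := ℝ)) (by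
      rw [← mul_assoc]; exact Nat.choose_mul_factorial_mul_factorial hkn)
  have hlogeq : Real.log n.factorial
      = Real.log (n.choose k) + (Real.log k.factorial + Real.log (n-k).factorial) := by
    rw [← hfacteq, Real.log_mul (by positivity) (by positivity),
      Real.log_mul (by positivity) (by positivity)]
  obtain ⟨hn1, hn2⟩ := logFact_bounds n (by omega)
  obtain ⟨hk1', hk2'⟩ := logFact_bounds k h1
  obtain ⟨hm1, hm2⟩ := logFact_bounds (n-k) hnk1
  rw [hcast] at hm1 hm2
  have hckn : Real.log k ≤ Real.log n := Real.log_le_log (by exact_mod_cast h1) (by exact_mod_cast hkn)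
  have hcnk : Real.log ((n:ℝ)-(k:ℝ)) ≤ Real.log n := by
    apply Real.log_le_log
    · rw [← hcast]; exact_mod_cast hnk1
    · have : (0:ℝ) ≤ (k:ℝ) := k.cast_nonneg
      linarith
  have hlogn0 : 0 ≤ Real.log n := Real.log_nonneg (by exact_mod_cast (by omega : 1 ≤ n))
  have hnc : ((n-k:ℕ):ℝ) = (n:ℝ) - (k:ℝ) := hcast
  rw [abs_le]
  constructor
  · push_cast [hnc] at hm1 hm2 hlogeq ⊢
    linarith
  · push_cast [hnc] at hm1 hm2 hlogeq ⊢
    linarith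

lemma entropy_limit {α : ℝ} (hα0 : 0 < α) (hα1 : α < 1) (k : ℕ → ℕ)
    (hk : Tendsto (fun N => (k N : ℝ)/(N:ℝ)) atTop (nhds α))
    (hk1 : ∀ᶠ N in atTop, 1 ≤ k N ∧ k N < N) :
    Tendsto (fun N : ℕ => (1/(N:ℝ)) * Real.log ((N.choose (k N) : ℝ)))
      atTop (nhds (-(α * Real.log α + (1-α) * Real.log (1-α)))) := by
  set F : ℝ → ℝ := fun x => -(x * Real.log x + (1-x) * Real.log (1-x)) with hF
  have hlog1 : Tendsto (fun N => Real.log ((k N:ℝ)/(N:ℝ))) atTop (nhds (Real.log α)) :=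
    ((Real.continuousAt_log hα0.ne').tendsto).comp hk
  have hlog2 : Tendsto (fun N => Real.log (1 - (k N:ℝ)/(N:ℝ))) atTop (nhds (Real.log (1-α))) :=
    ((Real.continuousAt_log (by linarith : (1:ℝ)-α ≠ 0)).tendsto).comp (tendsto_const_nhds.sub hk)
  have hFlim : Tendsto (fun N => F ((k N:ℝ)/(N:ℝ))) atTop (nhds (F α)) :=
    ((hk.mul hlog1).add ((tendsto_const_nhds.sub hk).mul hlog2)).neg
  have herr : Tendsto (fun N : ℕ => (2 + 2*Real.log N)/(N:ℝ)) atTop (nhds 0) := by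
    have h1 : Tendsto (fun N : ℕ => Real.log N / (N:ℝ)) atTop (nhds 0) :=
      (Real.isLittleO_log_id_atTop.tendsto_div_nhds_zero).comp tendsto_natCast_atTop_atTop
    have h2 : Tendsto (fun N : ℕ => 2 / (N:ℝ)) atTop (nhds 0) :=
      tendsto_const_nhds.div_atTop tendsto_natCast_atTop_atTop
    have := h2.add (h1.const_mul 2)
    simp only [mul_zero, add_zero, zero_add] at this
    apply this.congr
    intro N
    rw [add_div]
    ring
  -- identity: for 1 ≤ k < N, (1/N)*φ = F (k/N)
  have hexact : ∀ N : ℕ, 1 ≤ k N → k N < N →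
      (1/(N:ℝ)) * ((N:ℝ) * Real.log N - (k N:ℝ) * Real.log (k N)
          - ((N:ℝ)-(k N:ℝ)) * Real.log ((N:ℝ)-(k N:ℝ)))
        = F ((k N:ℝ)/(N:ℝ)) := by
    intro N h1 h2
    have hN0 : (0:ℝ) < N := by exact_mod_cast (by omega : 0 < N)
    have hk0 : (0:ℝ) < k N := by exact_mod_cast h1
    have hnk0 : (0:ℝ) < (N:ℝ) - (k N:ℝ) := by
      have : (k N:ℝ) < (N:ℝ) := by exact_mod_cast h2
      linarith
    have e1 : Real.log ((k N:ℝ)/(N:ℝ)) = Real.log (k N) - Real.log N :=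
      Real.log_div hk0.ne' hN0.ne'
    have e2 : (1:ℝ) - (k N:ℝ)/(N:ℝ) = ((N:ℝ)-(k N:ℝ))/(N:ℝ) := by field_simp
    have e3 : Real.log (1 - (k N:ℝ)/(N:ℝ)) = Real.log ((N:ℝ)-(k N:ℝ)) - Real.log N := by
      rw [e2]; exact Real.log_div hnk0.ne' hN0.ne'
    rw [hF]
    simp only
    rw [e1, e3, e2]
    field_simp
    ring
  have hub : ∀ᶠ N : ℕ in atTop, (1/(N:ℝ)) * Real.log ((N.choose (k N) : ℝ))
      ≤ F ((k N:ℝ)/(N:ℝ)) + (2 + 2*Real.log N)/(N:ℝ) := by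
    filter_upwards [hk1, eventually_ge_atTop 1] with N hN hN1
    obtain ⟨h1, h2⟩ := hN
    have hb := logChoose_bound N (k N) h1 h2
    rw [abs_le] at hb
    have hN0 : (0:ℝ) < N := by exact_mod_cast hN1
    have hex := hexact N h1 h2
    have hmul := mul_le_mul_of_nonneg_left hb.2 (le_of_lt (by positivity : (0:ℝ) < 1/(N:ℝ)))
    rw [mul_sub] at hmul
    have hdiv : (2 + 2*Real.log N)/(N:ℝ) = (1/(N:ℝ)) * (2 + 2*Real.log N) := by ring
    rw [hdiv]
    linarith
  have hlb : ∀ᶠ N : ℕ in atTop, F ((k N:ℝ)/(N:ℝ)) - (2 + 2*Real.log N)/(N:ℝ)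
      ≤ (1/(N:ℝ)) * Real.log ((N.choose (k N) : ℝ)) := by
    filter_upwards [hk1, eventually_ge_atTop 1] with N hN hN1
    obtain ⟨h1, h2⟩ := hN
    have hb := logChoose_bound N (k N) h1 h2
    rw [abs_le] at hb
    have hN0 : (0:ℝ) < N := by exact_mod_cast hN1
    have hex := hexact N h1 h2
    have hmul := mul_le_mul_of_nonneg_left hb.1 (le_of_lt (by positivity : (0:ℝ) < 1/(N:ℝ)))
    rw [mul_sub, mul_neg] at hmul
    have hdiv : (2 + 2*Real.log N)/(N:ℝ) = (1/(N:ℝ)) * (2 + 2*Real.log N) := by ring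
    rw [hdiv]
    linarith
  have hFα : F α = -(α * Real.log α + (1-α) * Real.log (1-α)) := rfl
  rw [← hFα]
  have hupper : Tendsto (fun N : ℕ => F ((k N:ℝ)/(N:ℝ)) + (2 + 2*Real.log N)/(N:ℝ)) atTop (nhds (F α)) := by
    have := hFlim.add herr; simpa using this
  have hlower : Tendsto (fun N : ℕ => F ((k N:ℝ)/(N:ℝ)) - (2 + 2*Real.log N)/(N:ℝ)) atTop (nhds (F α)) := by
    have := hFlim.sub herr; simpa using this
  exact tendsto_of_tendsto_of_tendsto_of_le_of_le' hlower hupper hlb hub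

/-- negative binomial weight: P(τ₁+⋯+τ_{r+1} = m) -/
noncomputable def negb (p : ℝ) (r m : ℕ) : ℝ :=
  if r + 1 ≤ m then ((m-1).choose r : ℝ) * ((1-p)^(r+1) * p^(m-(r+1))) else 0

lemma negb_nonneg {p : ℝ} (hp0 : 0 ≤ p) (hp1 : p ≤ 1) (r m : ℕ) : 0 ≤ negb p r m := by
  unfold negb; split
  · have h : (0:ℝ) ≤ 1 - p := by linarith
    positivity
  · exact le_refl 0

lemma geom_pmf_eq {p : ℝ} (r m : ℕ) :
    (if m - r - 1 = 0 then (0:ℝ) else p^(m-r-2) * (1-p)) = (if r + 1 ≤ m - 1 then p^(m-r-2)*(1-p) else 0) := by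
  split <;> split <;> first | rfl | omega

/-- convolution identity for negb -/
lemma negb_conv {p : ℝ} (r m : ℕ) :
    ∑ k ∈ Finset.range (m+1),
        negb p r k * (if m - k = 0 then (0:ℝ) else p^(m-k-1) * (1-p))
      = negb p (r+1) m := by
  by_cases hm : r + 2 ≤ m
  · -- restrict to Icc (r+1) (m-1)
    have hsub : Finset.Icc (r+1) (m-1) ⊆ Finset.range (m+1) := by
      intro x hx
      simp only [Finset.mem_Icc] at hx
      simp only [Finset.mem_range]
      omega
    rw [← Finset.sum_subset hsub]
    · -- on the Icc, compute
      have hstep : ∀ k ∈ Finset.Icc (r+1) (m-1),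
          negb p r k * (if m - k = 0 then (0:ℝ) else p^(m-k-1) * (1-p))
            = ((1-p)^(r+2) * p^(m-(r+2))) * ((k-1).choose r : ℝ) := by
        intro k hk
        simp only [Finset.mem_Icc] at hk
        have h1 : r + 1 ≤ k := hk.1
        have h2 : k ≤ m - 1 := hk.2
        have h3 : m - k ≠ 0 := by omega
        rw [if_neg h3]
        unfold negb
        rw [if_pos h1]
        have hpow : p^(k-(r+1)) * p^(m-k-1) = p^(m-(r+2)) := by
          rw [← pow_add]
          congr 1
          omega
        have hq : (1-p)^(r+1) * (1-p) = (1-p)^(r+2) := by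
          rw [← pow_succ]
        calc ((k-1).choose r : ℝ) * ((1-p)^(r+1) * p^(k-(r+1))) * (p^(m-k-1) * (1-p))
            = ((1-p)^(r+1) * (1-p)) * (p^(k-(r+1)) * p^(m-k-1)) * ((k-1).choose r : ℝ) := by ring
          _ = ((1-p)^(r+2) * p^(m-(r+2))) * ((k-1).choose r : ℝ) := by rw [hpow, hq]
      rw [Finset.sum_congr rfl hstep, ← Finset.mul_sum]
      have hsum : ∑ k ∈ Finset.Icc (r+1) (m-1), ((k-1).choose r : ℝ)
          = ((m-1).choose (r+1) : ℝ) := by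
        have hnat : ∑ k ∈ Finset.Icc (r+1) (m-1), (k-1).choose r = (m-1).choose (r+1) := by
          have hmap : Finset.Icc (r+1) (m-1)
              = (Finset.Icc r (m-2)).map ⟨fun x => x + 1, add_left_injective 1⟩ := by
            ext x
            simp only [Finset.mem_Icc, Finset.mem_map, Function.Embedding.coeFn_mk]
            constructor
            · intro hx; exact ⟨x - 1, by omega, by omega⟩
            · rintro ⟨y, hy, rfl⟩; omega
          rw [hmap, Finset.sum_map]
          simp only [Function.Embedding.coeFn_mk, Nat.add_sub_cancel]
          have := Nat.sum_Icc_choose (m-2) r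
          rw [this]
          congr 1
          omega
        exact_mod_cast congrArg (Nat.cast (R := ℝ)) hnat
      rw [hsum]
      unfold negb
      rw [if_pos (by omega : r + 1 + 1 ≤ m)]
      ring
    · -- terms outside Icc vanish
      intro k hk hknot
      simp only [Finset.mem_range] at hk
      simp only [Finset.mem_Icc, not_and_or, not_le] at hknot
      rcases hknot with h | h
      · unfold negb
        rw [if_neg (by omega)]
        ring
      · have : m - k = 0 := by omega
        rw [if_pos this]
        ring
  · -- m < r+2 : both sides zero
    rw [negb, if_neg (by omega)]
    apply Finset.sum_eq_zero
    intro k hk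
    simp only [Finset.mem_range] at hk
    by_cases h1 : r + 1 ≤ k
    · have : m - k = 0 := by omega
      rw [if_pos this]; ring
    · rw [negb, if_neg h1]; ring

lemma conv_step {Ω : Type*} [MeasurableSpace Ω] (μ : Measure Ω)
    (τ : ℕ → Ω → ℕ) (hmeas : ∀ i, Measurable (τ i))
    (hind : iIndepFun τ μ) (r m : ℕ) :
    μ {ω | ∑ i ∈ Finset.range (r+1), τ i ω = m}
      = ∑ k ∈ Finset.range (m+1),
          μ {ω | ∑ i ∈ Finset.range r, τ i ω = k} * μ {ω | τ r ω = m - k} := by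
  have hS : Measurable (fun ω => ∑ i ∈ Finset.range r, τ i ω) :=
    Finset.measurable_sum _ (fun i _ => hmeas i)
  have hindep : IndepFun (fun ω => ∑ i ∈ Finset.range r, τ i ω) (τ r) μ := by
    have h := hind.indepFun_finsetSum_of_notMem (fun i => hmeas i)
      (by simp : r ∉ Finset.range r)
    have he : (∑ j ∈ Finset.range r, τ j) = (fun ω => ∑ i ∈ Finset.range r, τ i ω) := by
      ext ω; simp [Finset.sum_apply]
    rwa [he] at h
  have hset : {ω | ∑ i ∈ Finset.range (r+1), τ i ω = m}
      = ⋃ k ∈ Finset.range (m+1),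
          ({ω | ∑ i ∈ Finset.range r, τ i ω = k} ∩ {ω | τ r ω = m - k}) := by
    ext ω
    simp only [Finset.sum_range_succ, Set.mem_setOf_eq, Set.mem_iUnion, Finset.mem_range,
      Set.mem_inter_iff]
    constructor
    · intro h; exact ⟨_, by omega, rfl, by omega⟩
    · rintro ⟨k, hk, h1, h2⟩; omega
  rw [hset, measure_biUnion_finset]
  · refine Finset.sum_congr rfl (fun k _ => ?_)
    have h := hindep.measure_inter_preimage_eq_mul (s := {k}) (t := {m-k})
      (measurableSet_singleton _) (measurableSet_singleton _)
    simpa [Set.preimage] using h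
  · intro a ha b hb hab
    simp only [Finset.coe_sort_coe, Set.disjoint_left]
    intro ω hωa hωb
    exact hab (by simp only [Set.mem_inter_iff, Set.mem_setOf_eq] at hωa hωb; omega)
  · intro k _
    exact (hS (measurableSet_singleton k)).inter ((hmeas r) (measurableSet_singleton _))

lemma pmf_tau {Ω : Type*} [MeasurableSpace Ω] (μ : Measure Ω)
    (p : ℝ) (τ : ℕ → Ω → ℕ)
    (hzero : ∀ i, μ {ω | τ i ω = 0} = 0)
    (hgeo : ∀ i, ∀ k : ℕ, μ {ω | τ i ω = k + 1} = ENNReal.ofReal (p ^ k * (1 - p)))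
    (i m : ℕ) :
    μ {ω | τ i ω = m} = ENNReal.ofReal (if m = 0 then 0 else p^(m-1) * (1-p)) := by
  cases m with
  | zero => simpa using hzero i
  | succ k => simpa using hgeo i k

lemma pmfS {Ω : Type*} [MeasurableSpace Ω] (μ : Measure Ω)
    (p : ℝ) (hp0 : 0 < p) (hp1 : p < 1) (τ : ℕ → Ω → ℕ) (hmeas : ∀ i, Measurable (τ i))
    (hzero : ∀ i, μ {ω | τ i ω = 0} = 0)
    (hgeo : ∀ i, ∀ k : ℕ, μ {ω | τ i ω = k + 1} = ENNReal.ofReal (p ^ k * (1 - p)))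
    (hind : iIndepFun τ μ) :
    ∀ r m, μ {ω | ∑ i ∈ Finset.range (r+1), τ i ω = m} = ENNReal.ofReal (negb p r m) := by
  intro r
  induction r with
  | zero =>
    intro m
    have h : {ω | ∑ i ∈ Finset.range 1, τ i ω = m} = {ω | τ 0 ω = m} := by
      ext ω; simp
    rw [h, pmf_tau μ p τ hzero hgeo 0 m]
    congr 1
    unfold negb
    cases m with
    | zero => simp
    | succ j =>
      rw [if_neg (by omega), if_pos (by omega)]
      simp
      ring
  | succ r ih =>
    intro m
    rw [conv_step μ τ hmeas hind (r+1) m]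
    have hterm : ∀ k ∈ Finset.range (m+1),
        μ {ω | ∑ i ∈ Finset.range (r+1), τ i ω = k} * μ {ω | τ (r+1) ω = m - k}
          = ENNReal.ofReal (negb p r k * (if m - k = 0 then 0 else p^(m-k-1) * (1-p))) := by
      intro k _
      rw [ih k, pmf_tau μ p τ hzero hgeo (r+1) (m-k),
        ← ENNReal.ofReal_mul (negb_nonneg hp0.le hp1.le r k)]
    rw [Finset.sum_congr rfl hterm, ← ENNReal.ofReal_sum_of_nonneg, negb_conv]
    intro k _
    apply mul_nonneg (negb_nonneg hp0.le hp1.le r k)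
    split
    · exact le_refl 0
    · have h : (0:ℝ) ≤ 1 - p := by linarith
      positivity

lemma tailS {Ω : Type*} [MeasurableSpace Ω] (μ : Measure Ω)
    (p : ℝ) (hp0 : 0 < p) (hp1 : p < 1) (τ : ℕ → Ω → ℕ) (hmeas : ∀ i, Measurable (τ i))
    (hzero : ∀ i, μ {ω | τ i ω = 0} = 0)
    (hgeo : ∀ i, ∀ k : ℕ, μ {ω | τ i ω = k + 1} = ENNReal.ofReal (p ^ k * (1 - p)))
    (hind : iIndepFun τ μ) (r N : ℕ) :
    μ {ω | N < ∑ i ∈ Finset.range (r+1), τ i ω}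
      = ∑' (j : ℕ), ENNReal.ofReal (negb p r (N+1+j)) := by
  have hS : Measurable (fun ω => ∑ i ∈ Finset.range (r+1), τ i ω) :=
    Finset.measurable_sum _ (fun i _ => hmeas i)
  have hset : {ω | N < ∑ i ∈ Finset.range (r+1), τ i ω}
      = ⋃ (j : ℕ), {ω | ∑ i ∈ Finset.range (r+1), τ i ω = N+1+j} := by
    ext ω
    simp only [Set.mem_setOf_eq, Set.mem_iUnion]
    constructor
    · intro h; exact ⟨∑ i ∈ Finset.range (r+1), τ i ω - N - 1, by omega⟩
    · rintro ⟨j, hj⟩; omega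
  rw [hset, measure_iUnion]
  · exact tsum_congr fun j => pmfS μ p hp0 hp1 τ hmeas hzero hgeo hind r (N+1+j)
  · intro a b hab
    simp only [Set.disjoint_left]
    intro ω h1 h2
    simp only [Set.mem_setOf_eq] at h1 h2
    exact hab (by omega)
  · intro j
    exact hS (measurableSet_singleton (N+1+j))

lemma negb_eq (p : ℝ) (r N j : ℕ) (hrN : r ≤ N) :
    negb p r (N+1+j) = ((N+j).choose r : ℝ) * ((1-p)^(r+1) * p^(N+j-r)) := by
  unfold negb
  rw [if_pos (by omega)]
  have e1 : N+1+j-1 = N+j := by omega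
  have e2 : N+1+j-(r+1) = N+j-r := by omega
  rw [e1, e2]

lemma negb_ratio {p ρ : ℝ} (hp0 : 0 < p) (hp1 : p < 1) (r N : ℕ) (hrN : r ≤ N)
    (hρp : p ≤ ρ) (hbase : ((N:ℝ)+1) * p ≤ ρ * ((N:ℝ)+1-(r:ℝ))) (j : ℕ) :
    negb p r (N+1+(j+1)) ≤ ρ * negb p r (N+1+j) := by
  have hq : (0:ℝ) < 1 - p := by linarith
  rw [negb_eq p r N j hrN]
  have h2 : negb p r (N+1+(j+1)) = ((N+j+1).choose r : ℝ) * ((1-p)^(r+1) * p^(N+j+1-r)) := by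
    rw [negb_eq p r N (j+1) hrN]
    have e1 : N+(j+1) = N+j+1 := by omega
    rw [e1]
  rw [h2]
  have hpows : p^(N+j+1-r) = p * p^(N+j-r) := by
    rw [← pow_succ']
    congr 1
    omega
  rw [hpows]
  set E : ℝ := (1-p)^(r+1) * p^(N+j-r) with hE
  have hEpos : 0 < E := by positivity
  have hcast : (((N+j).choose r : ℝ)) * ((N:ℝ)+(j:ℝ)+1)
      = (((N+j+1).choose r : ℝ)) * ((N:ℝ)+(j:ℝ)+1-(r:ℝ)) := by
    have hnat := Nat.choose_mul_succ_eq (N+j) r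
    have hc : ((N+j+1-r:ℕ):ℝ) = (N:ℝ)+(j:ℝ)+1-(r:ℝ) := by
      rw [Nat.cast_sub (by omega)]
      push_cast; ring
    have := congrArg (Nat.cast (R := ℝ)) hnat
    push_cast at this
    rw [← hc]
    push_cast
    linarith
  have hcpos : (0:ℝ) < (N:ℝ)+(j:ℝ)+1-(r:ℝ) := by
    have : (r:ℝ) ≤ (N:ℝ) := by exact_mod_cast hrN
    have : (0:ℝ) ≤ (j:ℝ) := j.cast_nonneg
    linarith
  -- key: c1 * p ≤ ρ * c0
  have hkey : ((N+j+1).choose r : ℝ) * p ≤ ρ * ((N+j).choose r : ℝ) := by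
    have hgrow : ((N:ℝ)+(j:ℝ)+1) * p ≤ ρ * ((N:ℝ)+(j:ℝ)+1-(r:ℝ)) := by
      have hj : (0:ℝ) ≤ (j:ℝ) := j.cast_nonneg
      nlinarith
    have hc0 : (0:ℝ) ≤ ((N+j).choose r : ℝ) := Nat.cast_nonneg _
    have h3 : ((N+j+1).choose r : ℝ) * p * ((N:ℝ)+(j:ℝ)+1-(r:ℝ))
        ≤ ρ * ((N+j).choose r : ℝ) * ((N:ℝ)+(j:ℝ)+1-(r:ℝ)) := by
      calc ((N+j+1).choose r : ℝ) * p * ((N:ℝ)+(j:ℝ)+1-(r:ℝ))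
          = (((N+j+1).choose r : ℝ) * ((N:ℝ)+(j:ℝ)+1-(r:ℝ))) * p := by ring
        _ = (((N+j).choose r : ℝ) * ((N:ℝ)+(j:ℝ)+1)) * p := by rw [← hcast]
        _ ≤ ((N+j).choose r : ℝ) * (ρ * ((N:ℝ)+(j:ℝ)+1-(r:ℝ))) := by
            rw [mul_assoc]
            exact mul_le_mul_of_nonneg_left hgrow hc0
        _ = ρ * ((N+j).choose r : ℝ) * ((N:ℝ)+(j:ℝ)+1-(r:ℝ)) := by ring
    exact le_of_mul_le_mul_right h3 hcpos
  calc ((N+j+1).choose r : ℝ) * ((1-p)^(r+1) * (p * p^(N+j-r)))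
      = (((N+j+1).choose r : ℝ) * p) * E := by rw [hE]; ring
    _ ≤ (ρ * ((N+j).choose r : ℝ)) * E := mul_le_mul_of_nonneg_right hkey hEpos.le
    _ = ρ * (((N+j).choose r : ℝ) * E) := by ring

lemma negb_geom {p ρ : ℝ} (hp0 : 0 < p) (hp1 : p < 1) (r N : ℕ) (hrN : r ≤ N)
    (hρp : p ≤ ρ) (hbase : ((N:ℝ)+1) * p ≤ ρ * ((N:ℝ)+1-(r:ℝ))) :
    ∀ j, negb p r (N+1+j) ≤ negb p r (N+1) * ρ^j := by
  intro j
  induction j with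
  | zero => simp
  | succ j ih =>
    have h := negb_ratio hp0 hp1 r N hrN hρp hbase j
    have hρ0 : (0:ℝ) ≤ ρ := le_trans hp0.le hρp
    calc negb p r (N+1+(j+1)) ≤ ρ * negb p r (N+1+j) := h
      _ ≤ ρ * (negb p r (N+1) * ρ^j) := mul_le_mul_of_nonneg_left ih hρ0
      _ = negb p r (N+1) * ρ^(j+1) := by ring

lemma tail_bounds {p ρ : ℝ} (hp0 : 0 < p) (hp1 : p < 1) (r N : ℕ) (hrN : r ≤ N)
    (hρp : p ≤ ρ) (hρ1 : ρ < 1) (hbase : ((N:ℝ)+1) * p ≤ ρ * ((N:ℝ)+1-(r:ℝ))) :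
    Summable (fun j => negb p r (N+1+j)) ∧
    negb p r (N+1) ≤ (∑' j, negb p r (N+1+j)) ∧
    (∑' j, negb p r (N+1+j)) ≤ negb p r (N+1) * (1-ρ)⁻¹ := by
  have hρ0 : (0:ℝ) ≤ ρ := le_trans hp0.le hρp
  have hgeom := negb_geom hp0 hp1 r N hrN hρp hbase
  have hnn : ∀ j, 0 ≤ negb p r (N+1+j) := fun j => negb_nonneg hp0.le hp1.le r _
  have hsg : Summable (fun j : ℕ => negb p r (N+1) * ρ^j) :=
    (summable_geometric_of_lt_one hρ0 hρ1).mul_left _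
  have hsum : Summable (fun j => negb p r (N+1+j)) :=
    Summable.of_nonneg_of_le hnn hgeom hsg
  refine ⟨hsum, ?_, ?_⟩
  · have := Summable.le_tsum hsum 0 (fun j _ => hnn j)
    simpa using this
  · have h1 : (∑' j, negb p r (N+1+j)) ≤ ∑' j : ℕ, negb p r (N+1) * ρ^j :=
      Summable.tsum_le_tsum hgeom hsum hsg
    have h2 : (∑' j : ℕ, negb p r (N+1) * ρ^j) = negb p r (N+1) * (1-ρ)⁻¹ := by
      rw [tsum_mul_left, tsum_geometric_of_lt_one hρ0 hρ1]
    rw [← h2]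
    exact h1

/-- Error exponent of single-packet transmission over homogeneous links: for `0 < α < 1 - p`
and `r = ⌈αN⌉`, `-(1/N)·ln P(τ₁+⋯+τ_r > N) → D(α ‖ 1-p)` as `N → ∞`. -/
theorem error_exponent_homogeneous
    {Ω : Type*} [MeasurableSpace Ω] (μ : Measure Ω) [IsProbabilityMeasure μ]
    (p : ℝ) (hp0 : 0 < p) (hp1 : p < 1)
    (α : ℝ) (hα0 : 0 < α) (hα1 : α < 1 - p)
    (τ : ℕ → Ω → ℕ) (hmeas : ∀ i, Measurable (τ i))
    (hzero : ∀ i, μ {ω | τ i ω = 0} = 0)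
    (hgeo : ∀ i, ∀ k : ℕ, μ {ω | τ i ω = k + 1} = ENNReal.ofReal (p ^ k * (1 - p)))
    (hind : iIndepFun τ μ) :
    Tendsto
      (fun N : ℕ =>
        -(1 / (N : ℝ)) *
          Real.log ((μ {ω | N < ∑ i ∈ Finset.range ⌈α * N⌉₊, τ i ω}).toReal))
      atTop (nhds (klBin α (1 - p))) := by
  have hα1' : α < 1 := by linarith
  have hq0 : (0:ℝ) < 1 - p := by linarith
  have h1α : (0:ℝ) < 1 - α := by linarith
  set ρ : ℝ := (p/(1-α) + 1)/2 with hρdef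
  have hx1 : p/(1-α) < 1 := by rw [div_lt_one h1α]; linarith
  have hxp : p ≤ p/(1-α) := by
    rw [le_div_iff₀ h1α]; nlinarith
  have hρp : p ≤ ρ := by rw [hρdef]; linarith
  have hρ1 : ρ < 1 := by rw [hρdef]; linarith
  have hρ0 : (0:ℝ) < ρ := lt_of_lt_of_le hp0 hρp
  set rr : ℕ → ℕ := fun N => ⌈α * (N:ℝ)⌉₊ - 1 with hrrdef
  -- eventual facts
  have hαN : Tendsto (fun N : ℕ => α * (N:ℝ)) atTop atTop :=
    Tendsto.const_mul_atTop hα0 tendsto_natCast_atTop_atTop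
  have hceil1 : ∀ᶠ N : ℕ in atTop, 1 ≤ ⌈α * (N:ℝ)⌉₊ := by
    filter_upwards [hαN.eventually_ge_atTop 1] with N h
    have : (0:ℝ) < α * N := by linarith
    exact Nat.one_le_iff_ne_zero.2 (Nat.ceil_pos.2 this).ne'
  have hrr1 : ∀ᶠ N : ℕ in atTop, 1 ≤ rr N := by
    filter_upwards [hαN.eventually_ge_atTop 2] with N h
    have h2 : (1:ℝ) < α * N := by linarith
    have : 1 < ⌈α * (N:ℝ)⌉₊ := Nat.lt_ceil.2 (by exact_mod_cast h2)
    simp only [hrrdef]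
    omega
  have hceilN : ∀ N : ℕ, ⌈α * (N:ℝ)⌉₊ ≤ N := by
    intro N
    apply Nat.ceil_le.2
    calc α * (N:ℝ) ≤ 1 * N := by
          apply mul_le_mul_of_nonneg_right (le_of_lt hα1') (N.cast_nonneg)
      _ = (N:ℝ) := one_mul _
  have hrrN : ∀ᶠ N : ℕ in atTop, rr N < N := by
    filter_upwards [eventually_ge_atTop 1] with N h
    have := hceilN N
    simp only [hrrdef]
    omega
  -- cast bounds on rr
  have hrr_ub : ∀ N : ℕ, 1 ≤ ⌈α * (N:ℝ)⌉₊ → (rr N : ℝ) < α * N := by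
    intro N h1
    have hcast : (rr N : ℝ) = (⌈α * (N:ℝ)⌉₊ : ℝ) - 1 := by
      simp only [hrrdef]
      rw [Nat.cast_sub h1]
      norm_num
    have h2 : (⌈α * (N:ℝ)⌉₊ : ℝ) < α * N + 1 := Nat.ceil_lt_add_one (by positivity)
    linarith
  have hrr_lb : ∀ N : ℕ, 1 ≤ ⌈α * (N:ℝ)⌉₊ → α * N - 1 ≤ (rr N : ℝ) := by
    intro N h1
    have hcast : (rr N : ℝ) = (⌈α * (N:ℝ)⌉₊ : ℝ) - 1 := by
      simp only [hrrdef]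
      rw [Nat.cast_sub h1]
      norm_num
    have h2 : α * N ≤ (⌈α * (N:ℝ)⌉₊ : ℝ) := Nat.le_ceil _
    linarith
  -- x_N → α
  have hxlim : Tendsto (fun N : ℕ => (rr N : ℝ)/(N:ℝ)) atTop (nhds α) := by
    have hinv : Tendsto (fun N : ℕ => 1/(N:ℝ)) atTop (nhds 0) :=
      tendsto_one_div_atTop_nhds_zero_nat
    have hlo : Tendsto (fun N : ℕ => α - 1/(N:ℝ)) atTop (nhds α) := by
      have := tendsto_const_nhds (x := α) (f := atTop (α := ℕ)) |>.sub hinv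
      simpa using this
    apply tendsto_of_tendsto_of_tendsto_of_le_of_le' hlo tendsto_const_nhds
    · filter_upwards [hceil1, eventually_ge_atTop 1] with N h1 hN1
      have hN0 : (0:ℝ) < N := by exact_mod_cast hN1
      have h := hrr_lb N h1
      have heq : α - 1/(N:ℝ) = (α*N - 1)/N := by field_simp
      rw [heq]
      gcongr
    · filter_upwards [hceil1, eventually_ge_atTop 1] with N h1 hN1
      have hN0 : (0:ℝ) < N := by exact_mod_cast hN1
      have := hrr_ub N h1
      rw [div_le_iff₀ hN0]
      linarith [mul_comm α (N:ℝ)]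
  -- base ratio condition
  have hbase : ∀ᶠ N : ℕ in atTop, ((N:ℝ)+1) * p ≤ ρ * ((N:ℝ)+1-(rr N:ℝ)) := by
    have hs : ρ * (1-α) = (p + (1-α))/2 := by rw [hρdef]; field_simp
    have hsp : p < ρ * (1-α) := by rw [hs]; linarith
    obtain ⟨N₀, hN₀⟩ := exists_nat_ge (p / (ρ * (1-α) - p))
    filter_upwards [hceil1, eventually_ge_atTop N₀] with N h1 hN
    have hNc : (N₀:ℝ) ≤ (N:ℝ) := by exact_mod_cast hN
    have hub := hrr_ub N h1
    have hd : (0:ℝ) < ρ * (1-α) - p := by linarith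
    have hp2 : p ≤ (ρ * (1-α) - p) * N := by
      have : p / (ρ * (1-α) - p) ≤ (N:ℝ) := le_trans hN₀ hNc
      calc p = (p / (ρ * (1-α) - p)) * (ρ * (1-α) - p) := by field_simp
        _ ≤ (N:ℝ) * (ρ * (1-α) - p) := mul_le_mul_of_nonneg_right this hd.le
        _ = (ρ * (1-α) - p) * N := by ring
    have hchain : ((N:ℝ)+1) * p ≤ ρ * ((1-α) * N) := by nlinarith [(N.cast_nonneg : (0:ℝ) ≤ (N:ℝ))]
    have hgap : ρ * ((1-α) * N) ≤ ρ * ((N:ℝ)+1-(rr N:ℝ)) := by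
      apply mul_le_mul_of_nonneg_left _ hρ0.le
      nlinarith
    linarith
  -- eventual identification of the probability with the tsum
  set T : ℕ → ℝ := fun N => ∑' j, negb p (rr N) (N+1+j) with hTdef
  set f0 : ℕ → ℝ := fun N => negb p (rr N) (N+1) with hf0def
  have hTB : ∀ᶠ N : ℕ in atTop,
      Summable (fun j => negb p (rr N) (N+1+j)) ∧
      f0 N ≤ T N ∧ T N ≤ f0 N * (1-ρ)⁻¹ := by
    filter_upwards [hrrN, hbase] with N hN hb
    exact tail_bounds hp0 hp1 (rr N) N hN.le hρp hρ1 hb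
  have hPT : ∀ᶠ N : ℕ in atTop,
      (μ {ω | N < ∑ i ∈ Finset.range ⌈α * (N:ℝ)⌉₊, τ i ω}).toReal = T N := by
    filter_upwards [hceil1, hTB] with N h1 hTb
    have hre : ⌈α * (N:ℝ)⌉₊ = rr N + 1 := by simp only [hrrdef]; omega
    rw [hre]
    rw [tailS μ p hp0 hp1 τ hmeas hzero hgeo hind (rr N) N]
    rw [← ENNReal.ofReal_tsum_of_nonneg (fun j => negb_nonneg hp0.le hp1.le _ _) hTb.1]
    rw [ENNReal.toReal_ofReal]
    exact tsum_nonneg (fun j => negb_nonneg hp0.le hp1.le _ _)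
  have hf0pos : ∀ᶠ N : ℕ in atTop, 0 < f0 N := by
    filter_upwards [hrrN] with N hN
    have : f0 N = ((N.choose (rr N) : ℝ)) * ((1-p)^(rr N+1) * p^(N - rr N)) := by
      have := negb_eq p (rr N) N 0 hN.le
      simpa using this
    rw [this]
    have hc : 0 < N.choose (rr N) := Nat.choose_pos hN.le
    have hc' : (0:ℝ) < (N.choose (rr N) : ℝ) := by exact_mod_cast hc
    positivity
  -- the main exponent limit for f0
  have hH := entropy_limit hα0 hα1' rr hxlim (by
    filter_upwards [hrr1, hrrN] with N h1 h2; exact ⟨h1, h2⟩)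
  have hinv : Tendsto (fun N : ℕ => 1/(N:ℝ)) atTop (nhds 0) :=
    tendsto_one_div_atTop_nhds_zero_nat
  have hB : Tendsto (fun N : ℕ => ((rr N:ℝ)+1)/(N:ℝ)) atTop (nhds α) := by
    have := hxlim.add hinv
    rw [add_zero] at this
    apply this.congr
    intro N
    rw [← add_div]
  have hC : Tendsto (fun N : ℕ => ((N - rr N:ℕ):ℝ)/(N:ℝ)) atTop (nhds (1-α)) := by
    have hbase' : Tendsto (fun N : ℕ => 1 - (rr N:ℝ)/(N:ℝ)) atTop (nhds (1-α)) :=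
      tendsto_const_nhds.sub hxlim
    apply hbase'.congr'
    filter_upwards [hrrN, eventually_ge_atTop 1] with N hN hN1
    have hN0 : (0:ℝ) < N := by exact_mod_cast hN1
    rw [Nat.cast_sub hN.le, sub_div, div_self hN0.ne']
  have hcombined : Tendsto (fun N : ℕ =>
      -((1/(N:ℝ)) * Real.log ((N.choose (rr N) : ℝ)))
        - (((rr N:ℝ)+1)/(N:ℝ)) * Real.log (1-p)
        - (((N - rr N:ℕ):ℝ)/(N:ℝ)) * Real.log p) atTop
      (nhds (-(-(α * Real.log α + (1-α) * Real.log (1-α))) - α * Real.log (1-p)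
        - (1-α) * Real.log p)) :=
    (hH.neg.sub (hB.mul_const _)).sub (hC.mul_const _)
  have hkl : klBin α (1-p) = -(-(α * Real.log α + (1-α) * Real.log (1-α)))
      - α * Real.log (1-p) - (1-α) * Real.log p := by
    unfold klBin
    rw [show (1:ℝ) - (1 - p) = p by ring]
    rw [Real.log_div hα0.ne' hq0.ne', Real.log_div h1α.ne' hp0.ne']
    ring
  have hG : Tendsto (fun N : ℕ => -(1/(N:ℝ)) * Real.log (f0 N)) atTop (nhds (klBin α (1-p))) := by
    rw [hkl]
    apply hcombined.congr'
    filter_upwards [hrrN, eventually_ge_atTop 1] with N hN hN1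
    have hc : 0 < N.choose (rr N) := Nat.choose_pos hN.le
    have hc' : (0:ℝ) < (N.choose (rr N) : ℝ) := by exact_mod_cast hc
    have hfe : f0 N = ((N.choose (rr N) : ℝ)) * ((1-p)^(rr N+1) * p^(N - rr N)) := by
      have := negb_eq p (rr N) N 0 hN.le
      simpa using this
    rw [hfe, Real.log_mul hc'.ne' (by positivity),
      Real.log_mul (by positivity) (by positivity), Real.log_pow, Real.log_pow]
    push_cast [Nat.cast_sub hN.le]
    ring
  -- final squeeze
  have hlogc : Tendsto (fun N : ℕ => -(1/(N:ℝ)) * Real.log (f0 N) - (1/(N:ℝ)) * Real.log ((1-ρ)⁻¹))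
      atTop (nhds (klBin α (1-p))) := by
    have h2 : Tendsto (fun N : ℕ => (1/(N:ℝ)) * Real.log ((1-ρ)⁻¹)) atTop (nhds 0) := by
      have := hinv.mul_const (Real.log ((1-ρ)⁻¹))
      simpa using this
    have := hG.sub h2
    simpa using this
  apply tendsto_of_tendsto_of_tendsto_of_le_of_le' hlogc hG
  · -- lower bound
    filter_upwards [hPT, hTB, hf0pos, eventually_ge_atTop 1] with N hpt htb hf0 hN1
    have hN0 : (0:ℝ) < N := by exact_mod_cast hN1
    rw [hpt]
    have hc1 : (0:ℝ) < (1-ρ)⁻¹ := by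
      have : (0:ℝ) < 1 - ρ := by linarith
      positivity
    have hlog : Real.log (T N) ≤ Real.log (f0 N) + Real.log ((1-ρ)⁻¹) := by
      rw [← Real.log_mul hf0.ne' hc1.ne']
      apply Real.log_le_log (lt_of_lt_of_le hf0 htb.2.1)
      exact htb.2.2
    have hmul := mul_le_mul_of_nonneg_left hlog (by positivity : (0:ℝ) ≤ 1/(N:ℝ))
    rw [neg_mul, neg_mul]
    linarith [hmul]
  · -- upper bound
    filter_upwards [hPT, hTB, hf0pos] with N hpt htb hf0
    rw [hpt]
    have hlog : Real.log (f0 N) ≤ Real.log (T N) :=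
      Real.log_le_log hf0 htb.2.1
    have hmul := mul_le_mul_of_nonneg_left hlog (by positivity : (0:ℝ) ≤ 1/(N:ℝ))
    rw [neg_mul, neg_mul]
    linarith [hmul]
end

section
/- For the instantaneous-links homogeneous setting with p ∈ (0,1) and α < (1-p)/p, with r = ⌈αN⌉ and τ₁,…,τ_r i.i.d. non-shifted geometric with parameter p, the error exponent lim_{N→∞} -(1/N) ln P(τ₁+⋯+τ_r > N) equals (1+α)·D(α/(1+α) ‖ 1-p). -/
open MeasureTheory ProbabilityTheory Real Filter

/- Auxiliary lemmas -/

lemma hockey (r : ℕ) : ∀ m : ℕ, ∑ j ∈ Finset.range (m+1), ((j+r).choose r) = (m+r+1).choose (r+1) := by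
  intro m
  induction m with
  | zero => simp
  | succ m ih =>
      rw [Finset.sum_range_succ, ih]
      have : m + 1 + r + 1 = (m + r + 1) + 1 := by ring
      rw [this, Nat.choose_succ_succ' (m + r + 1) r]
      ring

lemma pmf_sum {Ω : Type*} [MeasurableSpace Ω] (μ : Measure Ω) [IsProbabilityMeasure μ]
    (p : ℝ) (hp0 : 0 < p) (hp1 : p < 1)
    (τ : ℕ → Ω → ℕ) (hmeas : ∀ i, Measurable (τ i))
    (hgeo : ∀ i, ∀ k : ℕ, μ {ω | τ i ω = k} = ENNReal.ofReal (p ^ k * (1 - p)))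
    (hind : iIndepFun τ μ) :
    ∀ (s : ℕ) (m : ℕ), μ {ω | ∑ i ∈ Finset.range (s+1), τ i ω = m}
      = ENNReal.ofReal (((m + s).choose s : ℝ) * p ^ m * (1 - p) ^ (s+1)) := by
  have hp' : (0:ℝ) ≤ 1 - p := by linarith
  intro s
  induction s with
  | zero =>
      intro m
      have h0 : {ω | ∑ i ∈ Finset.range (0+1), τ i ω = m} = {ω | τ 0 ω = m} := by
        ext ω; simp
      rw [h0, hgeo 0 m]
      congr 1
      simp
  | succ s ih =>
      intro m
      have hI : IndepFun (∑ j ∈ Finset.range (s+1), τ j) (τ (s+1)) μ :=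
        hind.indepFun_finset_sum_of_notMem hmeas (by simp)
      have hdecomp : {ω | ∑ i ∈ Finset.range (s+2), τ i ω = m}
          = ⋃ j ∈ Finset.range (m+1),
              ((fun ω => ∑ i ∈ Finset.range (s+1), τ i ω) ⁻¹' {j} ∩ (τ (s+1)) ⁻¹' {m - j}) := by
        ext ω
        simp only [Set.mem_setOf_eq, Set.mem_iUnion, Set.mem_inter_iff, Set.mem_preimage,
          Set.mem_singleton_iff, Finset.mem_range]
        rw [Finset.sum_range_succ]
        constructor
        · intro h
          exact ⟨∑ i ∈ Finset.range (s+1), τ i ω, by omega, rfl, by omega⟩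
        · rintro ⟨j, hj, h1, h2⟩
          omega
      have hSmeas : Measurable (fun ω => ∑ i ∈ Finset.range (s+1), τ i ω) := by
        exact Finset.measurable_sum _ (fun i _ => hmeas i)
      rw [hdecomp, measure_biUnion_finset]
      · have hterm : ∀ j ∈ Finset.range (m+1),
            μ ((fun ω => ∑ i ∈ Finset.range (s+1), τ i ω) ⁻¹' {j} ∩ (τ (s+1)) ⁻¹' {m - j})
            = ENNReal.ofReal ((((j + s).choose s : ℝ) * p ^ j * (1 - p) ^ (s+1)) * (p ^ (m - j) * (1 - p))) := by
          intro j hj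
          have hfun : (fun ω => ∑ i ∈ Finset.range (s+1), τ i ω) = (∑ j ∈ Finset.range (s+1), τ j) := by
            ext ω; simp
          rw [hfun]
          rw [hI.measure_inter_preimage_eq_mul _ _ (measurableSet_singleton j) (measurableSet_singleton (m-j))]
          have h1 : (∑ j ∈ Finset.range (s+1), τ j : Ω → ℕ) ⁻¹' {j} = {ω | ∑ i ∈ Finset.range (s+1), τ i ω = j} := by
            ext ω; simp
          have h2 : (τ (s+1)) ⁻¹' {m - j} = {ω | τ (s+1) ω = m - j} := rfl
          rw [h1, h2, ih j, hgeo (s+1) (m-j), ← ENNReal.ofReal_mul]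
          positivity
        rw [Finset.sum_congr rfl hterm]
        rw [← ENNReal.ofReal_sum_of_nonneg]
        · congr 1
          have key : ∀ j ∈ Finset.range (m+1),
              (((j + s).choose s : ℝ) * p ^ j * (1 - p) ^ (s+1)) * (p ^ (m - j) * (1 - p))
              = ((j + s).choose s : ℝ) * (p ^ m * (1 - p) ^ (s+2)) := by
            intro j hj
            simp only [Finset.mem_range] at hj
            have : p ^ j * p ^ (m - j) = p ^ m := by
              rw [← pow_add]; congr 1; omega
            calc (((j + s).choose s : ℝ) * p ^ j * (1 - p) ^ (s+1)) * (p ^ (m - j) * (1 - p))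
                = ((j + s).choose s : ℝ) * (p ^ j * p ^ (m-j)) * ((1 - p) ^ (s+1) * (1-p)) := by ring
              _ = ((j + s).choose s : ℝ) * (p ^ m * (1 - p) ^ (s+2)) := by rw [this, ← pow_succ]; ring
          rw [Finset.sum_congr rfl key, ← Finset.sum_mul]
          have : ∑ j ∈ Finset.range (m+1), (((j + s).choose s : ℕ) : ℝ) = ((m + s + 1).choose (s+1) : ℝ) := by
            rw [← Nat.cast_sum]
            exact_mod_cast congrArg (Nat.cast : ℕ → ℝ) (hockey s m)
          rw [this]
          have : m + (s+1) = m + s + 1 := by omega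
          rw [this]; ring
        · intro j hj; positivity
      · intro a _ b _ hab
        simp only [Function.onFun]
        apply Set.disjoint_left.2
        rintro ω ⟨h1, _⟩ ⟨h3, _⟩
        simp only [Set.mem_preimage, Set.mem_singleton_iff] at h1 h3
        exact hab (h1 ▸ h3 ▸ rfl)
      · intro j _
        exact (hSmeas (measurableSet_singleton j)).inter ((hmeas (s+1)) (measurableSet_singleton (m-j)))

lemma choose_ratio (a s : ℕ) (α : ℝ) (hα : 0 ≤ α) (hs : (s:ℝ) ≤ α * (a+1)) :
    ((a + s + 1).choose s : ℝ) ≤ (1+α) * ((a+s).choose s : ℝ) := by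
  cases s with
  | zero => simp; linarith
  | succ t =>
      have hP : (a + (t+1) + 1).choose (t+1) = (a+t+1).choose t + (a+t+1).choose (t+1) := by
        have : a + (t+1) + 1 = (a + t + 1) + 1 := by ring
        rw [this, Nat.choose_succ_succ' (a+t+1) t]
  -- ratio identity
      have hid : (a+t+1).choose (t+1) * (t+1) = (a+t+1).choose t * (a + 1) := by
        have := Nat.choose_succ_right_eq (a+t+1) t
        have h2 : a + t + 1 - t = a + 1 := by omega
        rw [h2] at this
        exact this
      have hidR : ((a+t+1).choose (t+1) : ℝ) * (t+1) = ((a+t+1).choose t : ℝ) * (a + 1) := by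
        exact_mod_cast hid
      have hcast : ((a + (t+1) + 1).choose (t+1) : ℝ) = ((a+t+1).choose t : ℝ) + ((a+t+1).choose (t+1) : ℝ) := by
        exact_mod_cast hP
      rw [hcast]
      have ha1 : (0:ℝ) < a + 1 := by positivity
      have hkey : ((a+t+1).choose t : ℝ) ≤ α * ((a+t+1).choose (t+1) : ℝ) := by
        have hnn : (0:ℝ) ≤ ((a+t+1).choose (t+1) : ℝ) := Nat.cast_nonneg _
        have hs' : ((t:ℝ)+1) ≤ α * (a+1) := by push_cast at hs ⊢; linarith
        nlinarith [hidR]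
      have hc : a + (t+1) = a + t + 1 := by ring
      rw [hc]
      linarith

lemma geom_bound (p α : ℝ) (hp0 : 0 < p) (hα : 0 ≤ α) (N s : ℕ) (hsN : (s:ℝ) ≤ α * N) :
    ∀ k : ℕ, ((N+1+k+s).choose s : ℝ) * p^(N+1+k)
      ≤ ((N+1+s).choose s : ℝ) * p^(N+1) * (p*(1+α))^k := by
  intro k
  induction k with
  | zero => simp
  | succ k ih =>
      have hstep : ((N+1+(k+1)+s).choose s : ℝ) ≤ (1+α) * ((N+1+k+s).choose s : ℝ) := by
        have h1 : (s:ℝ) ≤ α * (((N+1+k:ℕ):ℝ)+1) := by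
          push_cast
          nlinarith [hsN, hα]
        have := choose_ratio (N+1+k) s α hα h1
        have hc : N+1+k+s+1 = N+1+(k+1)+s := by ring
        rw [hc] at this
        exact this
      have hppow : (0:ℝ) < p ^ (N+1+k) := by positivity
      calc ((N+1+(k+1)+s).choose s : ℝ) * p^(N+1+(k+1))
          = (((N+1+(k+1)+s).choose s : ℝ)) * (p^(N+1+k) * p) := by
            rw [show N+1+(k+1) = (N+1+k)+1 from by ring, pow_succ]
        _ ≤ ((1+α) * ((N+1+k+s).choose s : ℝ)) * (p^(N+1+k) * p) := by
            apply mul_le_mul_of_nonneg_right hstep; positivity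
        _ = (((N+1+k+s).choose s : ℝ) * p^(N+1+k)) * (p * (1+α)) := by ring
        _ ≤ (((N+1+s).choose s : ℝ) * p^(N+1) * (p*(1+α))^k) * (p * (1+α)) := by
            apply mul_le_mul_of_nonneg_right ih; positivity
        _ = ((N+1+s).choose s : ℝ) * p^(N+1) * (p*(1+α))^(k+1) := by ring

lemma tail_tsum {Ω : Type*} [MeasurableSpace Ω] (μ : Measure Ω) [IsProbabilityMeasure μ]
    (p : ℝ) (hp0 : 0 < p) (hp1 : p < 1)
    (τ : ℕ → Ω → ℕ) (hmeas : ∀ i, Measurable (τ i))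
    (hpmf : ∀ (s : ℕ) (m : ℕ), μ {ω | ∑ i ∈ Finset.range (s+1), τ i ω = m}
      = ENNReal.ofReal (((m + s).choose s : ℝ) * p ^ m * (1 - p) ^ (s+1)))
    (N s : ℕ) :
    μ {ω | N < ∑ i ∈ Finset.range (s+1), τ i ω}
      = ∑' k : ℕ, ENNReal.ofReal (((N+1+k + s).choose s : ℝ) * p ^ (N+1+k) * (1 - p) ^ (s+1)) := by
  have hSmeas : Measurable (fun ω => ∑ i ∈ Finset.range (s+1), τ i ω) :=
    Finset.measurable_sum _ (fun i _ => hmeas i)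
  have hdecomp : {ω | N < ∑ i ∈ Finset.range (s+1), τ i ω}
      = ⋃ k : ℕ, {ω | ∑ i ∈ Finset.range (s+1), τ i ω = N+1+k} := by
    ext ω
    simp only [Set.mem_setOf_eq, Set.mem_iUnion]
    constructor
    · intro h; exact ⟨∑ i ∈ Finset.range (s+1), τ i ω - (N+1), by omega⟩
    · rintro ⟨k, hk⟩; omega
  rw [hdecomp, measure_iUnion]
  · exact tsum_congr (fun k => hpmf s (N+1+k))
  · intro a b hab
    apply Set.disjoint_left.2
    intro ω h1 h2
    simp only [Set.mem_setOf_eq] at h1 h2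
    exact hab (by omega)
  · intro k
    exact hSmeas (measurableSet_singleton (N+1+k))


lemma tsum_sandwich (p α : ℝ) (hp0 : 0 < p) (hp1 : p < 1) (hα : 0 ≤ α)
    (hq : p*(1+α) < 1) (N s : ℕ) (hsN : (s:ℝ) ≤ α * N) :
    ((N+1+s).choose s : ℝ) * p^(N+1) * (1-p)^(s+1)
      ≤ (∑' k : ℕ, ENNReal.ofReal (((N+1+k + s).choose s : ℝ) * p ^ (N+1+k) * (1 - p) ^ (s+1))).toReal
    ∧ (∑' k : ℕ, ENNReal.ofReal (((N+1+k + s).choose s : ℝ) * p ^ (N+1+k) * (1 - p) ^ (s+1))).toReal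
      ≤ (((N+1+s).choose s : ℝ) * p^(N+1) * (1-p)^(s+1)) * (1 - p*(1+α))⁻¹ := by
  set q : ℝ := p*(1+α) with hqdef
  have hq0 : 0 ≤ q := by positivity
  have h1p : (0:ℝ) < 1 - p := by linarith
  set c : ℝ := ((N+1+s).choose s : ℝ) * p^(N+1) * (1-p)^(s+1) with hcdef
  have hc0 : 0 ≤ c := by positivity
  set T := ∑' k : ℕ, ENNReal.ofReal (((N+1+k + s).choose s : ℝ) * p ^ (N+1+k) * (1 - p) ^ (s+1)) with hT
  -- upper bound
  have hub : T ≤ ENNReal.ofReal (c * (1-q)⁻¹) := by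
    have hterm : ∀ k : ℕ, ENNReal.ofReal (((N+1+k + s).choose s : ℝ) * p ^ (N+1+k) * (1 - p) ^ (s+1))
        ≤ ENNReal.ofReal c * (ENNReal.ofReal q)^k := by
      intro k
      have h1 : ((N+1+k + s).choose s : ℝ) * p ^ (N+1+k) * (1 - p) ^ (s+1) ≤ c * q^k := by
        have := geom_bound p α hp0 hα N s hsN k
        have h2 : (0:ℝ) ≤ (1-p)^(s+1) := by positivity
        calc ((N+1+k + s).choose s : ℝ) * p ^ (N+1+k) * (1 - p) ^ (s+1)
            ≤ (((N+1+s).choose s : ℝ) * p^(N+1) * q^k) * (1-p)^(s+1) := by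
              apply mul_le_mul_of_nonneg_right this h2
          _ = c * q^k := by rw [hcdef]; ring
      calc ENNReal.ofReal (((N+1+k + s).choose s : ℝ) * p ^ (N+1+k) * (1 - p) ^ (s+1))
          ≤ ENNReal.ofReal (c * q^k) := ENNReal.ofReal_le_ofReal h1
        _ = ENNReal.ofReal c * (ENNReal.ofReal q)^k := by
            rw [ENNReal.ofReal_mul hc0, ENNReal.ofReal_pow hq0]
    calc T ≤ ∑' k : ℕ, ENNReal.ofReal c * (ENNReal.ofReal q)^k := ENNReal.tsum_le_tsum hterm
      _ = ENNReal.ofReal c * ∑' k : ℕ, (ENNReal.ofReal q)^k := ENNReal.tsum_mul_left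
      _ = ENNReal.ofReal c * (1 - ENNReal.ofReal q)⁻¹ := by rw [ENNReal.tsum_geometric]
      _ = ENNReal.ofReal (c * (1-q)⁻¹) := by
          rw [← ENNReal.ofReal_one, ← ENNReal.ofReal_sub _ hq0]
          rw [← ENNReal.ofReal_inv_of_pos (by linarith)]
          rw [← ENNReal.ofReal_mul hc0]
  have hTne : T ≠ ⊤ := ne_top_of_le_ne_top ENNReal.ofReal_ne_top hub
  have hlb : ENNReal.ofReal c ≤ T := by
    have h0 : ENNReal.ofReal (((N+1+0 + s).choose s : ℝ) * p ^ (N+1+0) * (1 - p) ^ (s+1)) ≤ T :=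
      ENNReal.le_tsum 0
    simpa using h0
  constructor
  · have := ENNReal.toReal_mono hTne hlb
    rwa [ENNReal.toReal_ofReal hc0] at this
  · have := ENNReal.toReal_mono ENNReal.ofReal_ne_top hub
    rwa [ENNReal.toReal_ofReal (mul_nonneg hc0 (le_of_lt (inv_pos.2 (by linarith))))] at this

noncomputable def stirlErr (n : ℕ) : ℝ := Real.log (n.factorial) - ((n:ℝ) * Real.log n - n)

lemma stirlErr_eq (n : ℕ) (hn : 1 ≤ n) :
    stirlErr n = Real.log (Stirling.stirlingSeq n) + (1/2) * Real.log (2*n) := by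
  have hn0 : (0:ℝ) < n := by exact_mod_cast hn
  have hfac : (n.factorial : ℝ) = Stirling.stirlingSeq n * (Real.sqrt (2*n) * ((n:ℝ)/Real.exp 1)^n) := by
    rw [Stirling.stirlingSeq]
    field_simp
  have hsq : (0:ℝ) < Real.sqrt (2*n) := Real.sqrt_pos.2 (by positivity)
  have hpow : (0:ℝ) < ((n:ℝ)/Real.exp 1)^n := by positivity
  have hst : (0:ℝ) < Stirling.stirlingSeq n := by
    have := Nat.factorial_pos n
    have hf : (0:ℝ) < (n.factorial : ℝ) := by exact_mod_cast this
    rw [Stirling.stirlingSeq]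
    positivity
  rw [stirlErr, hfac, Real.log_mul (ne_of_gt hst) (by positivity), Real.log_mul (ne_of_gt hsq) (ne_of_gt hpow)]
  rw [Real.log_pow, Real.log_div (ne_of_gt hn0) (Real.exp_ne_zero 1), Real.log_exp,
    Real.log_sqrt (by positivity)]
  push_cast
  ring

lemma stirlErr_div_tendsto : Tendsto (fun n : ℕ => stirlErr n / n) atTop (nhds 0) := by
  have h1 : Tendsto (fun n : ℕ => Real.log (Stirling.stirlingSeq n) / n) atTop (nhds 0) := by
    have hlog : Tendsto (fun n : ℕ => Real.log (Stirling.stirlingSeq n)) atTop (nhds (Real.log (Real.sqrt π))) :=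
      (Real.continuousAt_log (ne_of_gt (Real.sqrt_pos.2 Real.pi_pos))).tendsto.comp
        Stirling.tendsto_stirlingSeq_sqrt_pi
    have := hlog.div_atTop (tendsto_natCast_atTop_atTop (R := ℝ))
    simpa using this
  have h2 : Tendsto (fun n : ℕ => Real.log (2*(n:ℝ)) / n) atTop (nhds 0) := by
    have hx : Tendsto (fun x : ℝ => Real.log x / x) atTop (nhds 0) :=
      Real.isLittleO_log_id_atTop.tendsto_div_nhds_zero
    have hcomp : Tendsto (fun n : ℕ => Real.log (2*(n:ℝ)) / (2*(n:ℝ))) atTop (nhds 0) :=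
      hx.comp ((tendsto_natCast_atTop_atTop (R := ℝ)).const_mul_atTop two_pos)
    have := hcomp.const_mul 2
    rw [mul_zero] at this
    apply this.congr'
    filter_upwards [eventually_ge_atTop 1] with n hn
    have hn0 : (0:ℝ) < n := by exact_mod_cast hn
    field_simp
  have key : Tendsto (fun n : ℕ => (Real.log (Stirling.stirlingSeq n) + (1/2) * Real.log (2*n)) / n) atTop (nhds 0) := by
    have hsum := h1.add (h2.const_mul (1/2))
    rw [mul_zero, add_zero] at hsum
    exact hsum.congr (fun n => by rw [add_div, mul_div_assoc])
  apply key.congr'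
  filter_upwards [eventually_ge_atTop 1] with n hn
  rw [stirlErr_eq n hn]

lemma stirlErr_scaled {m : ℕ → ℕ} {C : ℝ}
    (hm : Tendsto m atTop atTop) (hC : ∀ᶠ N : ℕ in atTop, (m N : ℝ) ≤ C * N) :
    Tendsto (fun N : ℕ => stirlErr (m N) / N) atTop (nhds 0) := by
  have h1 : Tendsto (fun N : ℕ => stirlErr (m N) / (m N)) atTop (nhds 0) :=
    stirlErr_div_tendsto.comp hm
  have h2 : Tendsto (fun N : ℕ => |stirlErr (m N) / (m N)| * C) atTop (nhds 0) := by
    have := (h1.abs.mul_const C)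
    simpa using this
  apply squeeze_zero_norm' _ h2
  filter_upwards [hC, eventually_gt_atTop 0, hm.eventually_gt_atTop 0] with N hCN hN hmN
  have hN0 : (0:ℝ) < N := by exact_mod_cast hN
  have hmN0 : (0:ℝ) < (m N : ℝ) := by exact_mod_cast hmN
  rw [Real.norm_eq_abs, abs_div]
  rw [abs_div]
  rw [abs_of_pos hN0, abs_of_pos hmN0] 
  rw [div_mul_eq_mul_div, div_le_div_iff₀ hN0 hmN0]
  have hCpos : 0 ≤ C := by
    by_contra h
    push_neg at h
    nlinarith
  calc |stirlErr (m N)| * (m N : ℝ) ≤ |stirlErr (m N)| * (C * N) := by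
        apply mul_le_mul_of_nonneg_left hCN (abs_nonneg _)
    _ = |stirlErr (m N)| * C * N := by ring



lemma phi_div (m N : ℕ) :
    ((m:ℝ)/N) * Real.log ((m:ℝ)/N) = ((m:ℝ) * Real.log m - (m:ℝ) * Real.log N)/N := by
  rcases Nat.eq_zero_or_pos m with hm | hm
  · simp [hm]
  rcases Nat.eq_zero_or_pos N with hN | hN
  · simp [hN]
  have hm0 : ((m:ℝ)) ≠ 0 := by positivity
  have hN0 : ((N:ℝ)) ≠ 0 := by
    have : (0:ℝ) < N := by exact_mod_cast hN
    exact ne_of_gt this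
  rw [Real.log_div hm0 hN0]
  ring

lemma log_choose_decomp (s N : ℕ) (hN : 1 ≤ N) :
    Real.log (((N+1+s).choose s : ℝ)) / N
      = (stirlErr (N+1+s) - stirlErr s - stirlErr (N+1))/N
        + ((((N+1+s:ℕ):ℝ)/N) * Real.log (((N+1+s:ℕ):ℝ)/N)
           - ((s:ℝ)/N) * Real.log ((s:ℝ)/N)
           - (((N+1:ℕ):ℝ)/N) * Real.log (((N+1:ℕ):ℝ)/N)) := by
  have hsle : s ≤ N+1+s := by omega
  have hsub : N+1+s - s = N+1 := by omega
  have hcast : ((N+1+s).choose s : ℝ) = ((N+1+s).factorial : ℝ) / ((s.factorial : ℝ) * ((N+1).factorial : ℝ)) := by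
    rw [Nat.cast_choose ℝ hsle, hsub]
  have hf1 : ((N+1+s).factorial : ℝ) ≠ 0 := by exact_mod_cast (Nat.factorial_pos _).ne'
  have hf2 : ((s).factorial : ℝ) ≠ 0 := by exact_mod_cast (Nat.factorial_pos _).ne'
  have hf3 : (((N+1)).factorial : ℝ) ≠ 0 := by exact_mod_cast (Nat.factorial_pos _).ne'
  rw [hcast, Real.log_div hf1 (by positivity), Real.log_mul hf2 hf3]
  have e1 : Real.log ((N+1+s).factorial : ℝ) = stirlErr (N+1+s) + (((N+1+s:ℕ):ℝ) * Real.log ((N+1+s:ℕ):ℝ) - ((N+1+s:ℕ):ℝ)) := by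
    rw [stirlErr]; push_cast; ring
  have e2 : Real.log ((s).factorial : ℝ) = stirlErr s + ((s:ℝ) * Real.log (s:ℝ) - (s:ℝ)) := by
    rw [stirlErr]; ring
  have e3 : Real.log (((N+1)).factorial : ℝ) = stirlErr (N+1) + (((N+1:ℕ):ℝ) * Real.log ((N+1:ℕ):ℝ) - ((N+1:ℕ):ℝ)) := by
    rw [stirlErr]; push_cast; ring
  rw [e1, e2, e3, phi_div (N+1+s) N, phi_div s N, phi_div (N+1) N]
  have hN0 : ((N:ℝ)) ≠ 0 := by
    have : (0:ℝ) < N := by exact_mod_cast hN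
    exact ne_of_gt this
  have hlin : ((N+1+s:ℕ):ℝ) = ((N+1:ℕ):ℝ) + (s:ℝ) := by push_cast; ring
  field_simp
  push_cast
  ring

lemma choose_exponent (α : ℝ) (hα : 0 < α) (s : ℕ → ℕ)
    (hs : Tendsto (fun N : ℕ => (s N : ℝ)/N) atTop (nhds α)) :
    Tendsto (fun N : ℕ => Real.log (((N+1+s N).choose (s N) : ℝ)) / N) atTop
      (nhds ((1+α)*Real.log (1+α) - α * Real.log α)) := by
  -- s N / N eventually close to α
  have hsev : ∀ᶠ N : ℕ in atTop, α/2 * N ≤ (s N : ℝ) ∧ (s N : ℝ) ≤ (α+1) * N := by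
    have h1 := hs.eventually (eventually_le_nhds (show α < α + 1 by linarith))
    have h2 := hs.eventually (eventually_ge_nhds (show α/2 < α by linarith))
    filter_upwards [h1, h2, eventually_ge_atTop 1] with N hle hge hN1
    have hN0 : (0:ℝ) < N := by exact_mod_cast hN1
    constructor
    · have := hge
      rw [le_div_iff₀ hN0] at this
      linarith [this]
    · have := hle
      rw [div_le_iff₀ hN0] at this
      linarith [this]
  have hsatTop : Tendsto (fun N => (s N : ℝ)) atTop atTop := by
    apply tendsto_atTop_mono' _ _ ((tendsto_natCast_atTop_atTop (R := ℝ)).const_mul_atTop (by linarith : (0:ℝ) < α/2))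
    filter_upwards [hsev] with N h
    exact h.1
  have hsnat : Tendsto s atTop atTop := by
    rw [← tendsto_natCast_atTop_iff (R := ℝ)]
    exact hsatTop
  -- Stirling error terms
  have hE1 : Tendsto (fun N : ℕ => stirlErr (N+1+s N) / N) atTop (nhds 0) := by
    apply stirlErr_scaled (C := α + 3)
    · exact tendsto_atTop_mono (fun N => by omega) hsnat
    · filter_upwards [hsev, eventually_ge_atTop 1] with N h hN1
      have hN0 : (1:ℝ) ≤ N := by exact_mod_cast hN1
      push_cast
      nlinarith [h.2]
  have hE2 : Tendsto (fun N : ℕ => stirlErr (s N) / N) atTop (nhds 0) := by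
    apply stirlErr_scaled (C := α + 1) hsnat
    filter_upwards [hsev] with N h
    exact h.2
  have hE3 : Tendsto (fun N : ℕ => stirlErr (N+1) / N) atTop (nhds 0) := by
    apply stirlErr_scaled (C := 2)
    · exact tendsto_add_atTop_nat 1
    · filter_upwards [eventually_ge_atTop 1] with N hN1
      have hN0 : (1:ℝ) ≤ N := by exact_mod_cast hN1
      push_cast
      nlinarith
  have hA : Tendsto (fun N : ℕ => (stirlErr (N+1+s N) - stirlErr (s N) - stirlErr (N+1))/N) atTop (nhds 0) := by
    have := (hE1.sub hE2).sub hE3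
    rw [sub_zero, sub_zero] at this
    exact this.congr (fun N => by rw [sub_div, sub_div])
  -- ratio limits
  have hu : Tendsto (fun N : ℕ => ((N+1+s N : ℕ):ℝ)/N) atTop (nhds (1+α)) := by
    have h1 : Tendsto (fun N : ℕ => ((N+1:ℕ):ℝ)/N) atTop (nhds 1) := by
      have : Tendsto (fun N : ℕ => 1 + 1/(N:ℝ)) atTop (nhds (1+0)) :=
        tendsto_const_nhds.add (tendsto_one_div_atTop_nhds_zero_nat)
      rw [add_zero] at this
      apply this.congr'
      filter_upwards [eventually_ge_atTop 1] with N hN1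
      have hN0 : ((N:ℝ)) ≠ 0 := by
        have : (1:ℝ) ≤ N := by exact_mod_cast hN1
        linarith
      push_cast
      field_simp
    have := h1.add hs
    apply this.congr' 
    filter_upwards [eventually_ge_atTop 1] with N hN1
    have hN0 : ((N:ℝ)) ≠ 0 := by
      have : (1:ℝ) ≤ N := by exact_mod_cast hN1
      linarith
    push_cast
    field_simp
  have hv : Tendsto (fun N : ℕ => ((N+1:ℕ):ℝ)/N) atTop (nhds 1) := by
    have : Tendsto (fun N : ℕ => 1 + 1/(N:ℝ)) atTop (nhds (1+0)) :=
      tendsto_const_nhds.add (tendsto_one_div_atTop_nhds_zero_nat)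
    rw [add_zero] at this
    apply this.congr'
    filter_upwards [eventually_ge_atTop 1] with N hN1
    have hN0 : ((N:ℝ)) ≠ 0 := by
      have : (1:ℝ) ≤ N := by exact_mod_cast hN1
      linarith
    push_cast
    field_simp
  -- φ(t) = t log t continuous at positive points
  have hphi : ∀ t : ℝ, 0 < t → ContinuousAt (fun t : ℝ => t * Real.log t) t := by
    intro t ht
    exact continuousAt_id.mul (Real.continuousAt_log (ne_of_gt ht))
  have hB1 : Tendsto (fun N : ℕ => (((N+1+s N:ℕ):ℝ)/N) * Real.log (((N+1+s N:ℕ):ℝ)/N)) atTop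
      (nhds ((1+α) * Real.log (1+α))) := (hphi (1+α) (by linarith)).tendsto.comp hu
  have hB2 : Tendsto (fun N : ℕ => ((s N:ℝ)/N) * Real.log ((s N:ℝ)/N)) atTop
      (nhds (α * Real.log α)) := (hphi α hα).tendsto.comp hs
  have hB3 : Tendsto (fun N : ℕ => (((N+1:ℕ):ℝ)/N) * Real.log (((N+1:ℕ):ℝ)/N)) atTop
      (nhds (1 * Real.log 1)) := (hphi 1 one_pos).tendsto.comp hv
  have hfinal := hA.add ((hB1.sub hB2).sub hB3)
  rw [Real.log_one, mul_zero, sub_zero, zero_add] at hfinal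
  apply hfinal.congr'
  filter_upwards [eventually_ge_atTop 1] with N hN1
  exact (log_choose_decomp (s N) N hN1).symm

/-- Error exponent for instantaneous homogeneous links: with i.i.d. non-shifted geometric
delays (`P(τ_i = k) = p^k(1-p)`, `k ≥ 0`), `r = ⌈αN⌉` and `α < (1-p)/p`,
`-(1/N)·ln P(τ₁+⋯+τ_r > N) → (1+α)·D(α/(1+α) ‖ 1-p)`. -/
theorem error_exponent_instantaneous_links
    {Ω : Type*} [MeasurableSpace Ω] (μ : Measure Ω) [IsProbabilityMeasure μ]
    (p : ℝ) (hp0 : 0 < p) (hp1 : p < 1)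
    (α : ℝ) (hα0 : 0 < α) (hα1 : α < (1 - p) / p)
    (τ : ℕ → Ω → ℕ) (hmeas : ∀ i, Measurable (τ i))
    (hgeo : ∀ i, ∀ k : ℕ, μ {ω | τ i ω = k} = ENNReal.ofReal (p ^ k * (1 - p)))
    (hind : iIndepFun τ μ) :
    Tendsto
      (fun N : ℕ =>
        -(1 / (N : ℝ)) *
          Real.log ((μ {ω | N < ∑ i ∈ Finset.range ⌈α * N⌉₊, τ i ω}).toReal))
      atTop (nhds ((1 + α) * klBin (α / (1 + α)) (1 - p))) := by
  have hp' : (0:ℝ) < 1 - p := by linarith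
  have hq1 : p * (1 + α) < 1 := by
    have h := (lt_div_iff₀ hp0).mp hα1
    nlinarith
  have hpmf := pmf_sum μ p hp0 hp1 τ hmeas hgeo hind
  set s : ℕ → ℕ := fun N => ⌈α * N⌉₊ - 1 with hsdef
  have hceil : ∀ N : ℕ, 1 ≤ N → ⌈α * (N:ℝ)⌉₊ = s N + 1 := by
    intro N hN
    have hN0 : (0:ℝ) < N := by exact_mod_cast hN
    have hpos : 0 < ⌈α * (N:ℝ)⌉₊ := Nat.ceil_pos.2 (by positivity)
    simp only [hsdef]
    omega
  have hscast : ∀ N : ℕ, 1 ≤ N → ((s N : ℝ)) = (⌈α * (N:ℝ)⌉₊ : ℝ) - 1 := by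
    intro N hN
    have := hceil N hN
    have : ⌈α * (N:ℝ)⌉₊ = s N + 1 := this
    push_cast [this]
    ring
  have hsle : ∀ N : ℕ, 1 ≤ N → (s N : ℝ) ≤ α * N := by
    intro N hN
    have hN0 : (0:ℝ) ≤ α * N := by positivity
    have h2 : (⌈α * (N:ℝ)⌉₊ : ℝ) < α * N + 1 := Nat.ceil_lt_add_one hN0
    rw [hscast N hN]; linarith
  have hslow : ∀ N : ℕ, 1 ≤ N → α * N - 1 ≤ (s N : ℝ) := by
    intro N hN
    have h2 : α * N ≤ (⌈α * (N:ℝ)⌉₊ : ℝ) := Nat.le_ceil _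
    rw [hscast N hN]; linarith
  have hstend : Tendsto (fun N : ℕ => (s N : ℝ)/N) atTop (nhds α) := by
    have hlow : Tendsto (fun N : ℕ => α - 1/(N:ℝ)) atTop (nhds (α - 0)) :=
      tendsto_const_nhds.sub tendsto_one_div_atTop_nhds_zero_nat
    rw [sub_zero] at hlow
    apply tendsto_of_tendsto_of_tendsto_of_le_of_le' hlow tendsto_const_nhds
    · filter_upwards [eventually_ge_atTop 1] with N hN
      have hN0 : (0:ℝ) < N := by exact_mod_cast hN
      rw [le_div_iff₀ hN0]
      have := hslow N hN
      field_simp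
      nlinarith [this]
    · filter_upwards [eventually_ge_atTop 1] with N hN
      have hN0 : (0:ℝ) < N := by exact_mod_cast hN
      rw [div_le_iff₀ hN0]
      have := hsle N hN
      nlinarith [this]
  -- the sandwich for the probability
  set K : ℝ := (1 - p*(1+α))⁻¹ with hKdef
  set c : ℕ → ℝ := fun N => ((N+1+s N).choose (s N) : ℝ) * p^(N+1) * (1-p)^(s N+1) with hcdef
  have hcpos : ∀ N : ℕ, 0 < c N := by
    intro N
    have h1 : 0 < ((N+1+s N).choose (s N)) := Nat.choose_pos (by omega)
    have h1' : (0:ℝ) < ((N+1+s N).choose (s N) : ℝ) := by exact_mod_cast h1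
    simp only [hcdef]
    positivity
  have hsandwich : ∀ N : ℕ, 1 ≤ N →
      c N ≤ (μ {ω | N < ∑ i ∈ Finset.range ⌈α * (N:ℝ)⌉₊, τ i ω}).toReal
      ∧ (μ {ω | N < ∑ i ∈ Finset.range ⌈α * (N:ℝ)⌉₊, τ i ω}).toReal ≤ c N * K := by
    intro N hN
    have hset : {ω | N < ∑ i ∈ Finset.range ⌈α * (N:ℝ)⌉₊, τ i ω}
        = {ω | N < ∑ i ∈ Finset.range (s N + 1), τ i ω} := by
      rw [hceil N hN]
    rw [hset, tail_tsum μ p hp0 hp1 τ hmeas hpmf N (s N)]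
    exact tsum_sandwich p α hp0 hp1 (le_of_lt hα0) hq1 N (s N) (hsle N hN)
  -- limit of the main exponent
  set β : ℝ := (1+α)*Real.log (1+α) - α * Real.log α with hβdef
  have hv : Tendsto (fun N : ℕ => ((N:ℝ)+1)/N) atTop (nhds 1) := by
    have h : Tendsto (fun N : ℕ => 1 + 1/(N:ℝ)) atTop (nhds (1+0)) :=
      tendsto_const_nhds.add tendsto_one_div_atTop_nhds_zero_nat
    rw [add_zero] at h
    apply h.congr'
    filter_upwards [eventually_ge_atTop 1] with N hN
    have hN0 : ((N:ℝ)) ≠ 0 := by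
      have : (0:ℝ) < N := by exact_mod_cast hN
      exact ne_of_gt this
    field_simp
  have hs1 : Tendsto (fun N : ℕ => ((s N:ℝ)+1)/N) atTop (nhds α) := by
    have h := hstend.add tendsto_one_div_atTop_nhds_zero_nat
    rw [add_zero] at h
    apply h.congr'
    filter_upwards [eventually_ge_atTop 1] with N hN
    have hN0 : ((N:ℝ)) ≠ 0 := by
      have : (0:ℝ) < N := by exact_mod_cast hN
      exact ne_of_gt this
    field_simp
  have hG : Tendsto (fun N : ℕ =>
      -(Real.log (((N+1+s N).choose (s N) : ℝ))/N) - ((N:ℝ)+1)/N * Real.log p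
        - ((s N:ℝ)+1)/N * Real.log (1-p)) atTop
      (nhds (-β - 1 * Real.log p - α * Real.log (1-p))) := by
    exact (((choose_exponent α hα0 s hstend).neg).sub (hv.mul_const (Real.log p))).sub
      (hs1.mul_const (Real.log (1-p)))
  have hLeq : -β - 1 * Real.log p - α * Real.log (1-p) = (1 + α) * klBin (α / (1 + α)) (1 - p) := by
    have h1α : (0:ℝ) < 1 + α := by linarith
    have ha : 1 - α/(1+α) = 1/(1+α) := by field_simp; ring
    rw [klBin, ha]
    rw [show (1 : ℝ) - (1 - p) = p from by ring]
    rw [Real.log_div (by positivity) (by positivity), Real.log_div (by positivity) (ne_of_gt hp0),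
      Real.log_div (by positivity) (ne_of_gt h1α), Real.log_div one_ne_zero (ne_of_gt h1α), Real.log_one]
    rw [hβdef]
    field_simp
    ring
  rw [← hLeq]
  -- squeeze
  have hlogK : Tendsto (fun N : ℕ => Real.log K / N) atTop (nhds 0) :=
    tendsto_const_div_atTop_nhds_zero_nat _
  have hGlow := hG.sub hlogK
  rw [sub_zero] at hGlow
  apply tendsto_of_tendsto_of_tendsto_of_le_of_le' hGlow hG
  · -- lower bound : G - log K / N ≤ F
    filter_upwards [eventually_ge_atTop 1] with N hN
    have hN0 : (0:ℝ) < N := by exact_mod_cast hN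
    obtain ⟨hlb, hub⟩ := hsandwich N hN
    have hPpos : 0 < (μ {ω | N < ∑ i ∈ Finset.range ⌈α * (N:ℝ)⌉₊, τ i ω}).toReal :=
      lt_of_lt_of_le (hcpos N) hlb
    have hlogc : Real.log (c N) = Real.log (((N+1+s N).choose (s N) : ℝ))
        + (N+1) * Real.log p + (s N+1) * Real.log (1-p) := by
      have h1' : (0:ℝ) < ((N+1+s N).choose (s N) : ℝ) := by
        exact_mod_cast Nat.choose_pos (show s N ≤ N+1+s N by omega)
      simp only [hcdef]
      rw [Real.log_mul (by positivity) (by positivity), Real.log_mul (ne_of_gt h1') (by positivity),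
        Real.log_pow, Real.log_pow]
      push_cast
      ring
    have hle : Real.log (μ {ω | N < ∑ i ∈ Finset.range ⌈α * (N:ℝ)⌉₊, τ i ω}).toReal
        ≤ Real.log (c N) + Real.log K := by
      have hKpos : 0 < K := by
        rw [hKdef]
        exact inv_pos.2 (by linarith)
      calc Real.log (μ {ω | N < ∑ i ∈ Finset.range ⌈α * (N:ℝ)⌉₊, τ i ω}).toReal
          ≤ Real.log (c N * K) := Real.log_le_log hPpos hub
        _ = Real.log (c N) + Real.log K := Real.log_mul (ne_of_gt (hcpos N)) (ne_of_gt hKpos)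
    have goal1 : -(Real.log (((N+1+s N).choose (s N) : ℝ))/N) - ((N:ℝ)+1)/N * Real.log p
        - ((s N:ℝ)+1)/N * Real.log (1-p) - Real.log K / N
        = -(1/(N:ℝ)) * (Real.log (c N) + Real.log K) := by
      rw [hlogc]
      push_cast
      field_simp
      ring
    rw [goal1]
    apply mul_le_mul_of_nonpos_left hle
    simp only [neg_nonpos]
    positivity
  · -- upper bound : F ≤ G
    filter_upwards [eventually_ge_atTop 1] with N hN
    have hN0 : (0:ℝ) < N := by exact_mod_cast hN
    obtain ⟨hlb, hub⟩ := hsandwich N hN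
    have hlogc : Real.log (c N) = Real.log (((N+1+s N).choose (s N) : ℝ))
        + (N+1) * Real.log p + (s N+1) * Real.log (1-p) := by
      have h1' : (0:ℝ) < ((N+1+s N).choose (s N) : ℝ) := by
        exact_mod_cast Nat.choose_pos (show s N ≤ N+1+s N by omega)
      simp only [hcdef]
      rw [Real.log_mul (by positivity) (by positivity), Real.log_mul (ne_of_gt h1') (by positivity),
        Real.log_pow, Real.log_pow]
      push_cast
      ring
    have hle : Real.log (c N) ≤ Real.log (μ {ω | N < ∑ i ∈ Finset.range ⌈α * (N:ℝ)⌉₊, τ i ω}).toReal :=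
      Real.log_le_log (hcpos N) hlb
    have goal1 : -(Real.log (((N+1+s N).choose (s N) : ℝ))/N) - ((N:ℝ)+1)/N * Real.log p
        - ((s N:ℝ)+1)/N * Real.log (1-p)
        = -(1/(N:ℝ)) * Real.log (c N) := by
      rw [hlogc]
      push_cast
      field_simp
      ring
    rw [goal1]
    apply mul_le_mul_of_nonpos_left hle
    simp only [neg_nonpos]
    positivity
end
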